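/- arXiv:1201.3928 — 2 statements merged into one kernel-verified Lean document; each statement's English description precedes it below -/
import Mathlib

section
/- Let P, Q ∈ Ψ(R) with P₊ = 1, and suppose that in Ψ(R)[ε] one has ( (P + εQ)(P + εQ)* )₋ = 0. Then P* + εQ* = P⁻¹ · ( 1 − ε Q P⁻¹ + ε ( Q P⁻¹ + P Q* )₊ ). -/
open scoped BigOperators

/-- Generalized binomial coefficient `C(k,l) = k(k-1)⋯(k-l+1)/l!` for `k : ℤ`. -/
def gbinom (k : ℤ) (l : ℕ) : ℚ :=
  (∏ i ∈ Finset.range l, ((k : ℚ) - i)) / (Nat.factorial l)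

/-- Pseudo-differential operators (and symbols): coefficient functions `ℤ → R`
with support bounded above.  The parameter `d` (the derivation) determines the product. -/
structure PDO (R : Type) [CommRing R] [Algebra ℚ R] (d : R →+ R) where
  coeff : ℤ → R
  bdd : ∃ N : ℤ, ∀ n : ℤ, N < n → coeff n = 0

namespace PDO

variable {R : Type} [CommRing R] [Algebra ℚ R] {d : R →+ R}

theorem ext' {A B : PDO R d} (h : A.coeff = B.coeff) : A = B := by
  cases A; cases B; cases h; rfl

set_option linter.unusedSectionVars false in
theorem iterD_zero (d : R →+ R) (j : ℕ) : d^[j] (0 : R) = 0 := by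
  induction j with
  | zero => rfl
  | succ j ih => rw [Function.iterate_succ_apply', ih, map_zero]

instance : Zero (PDO R d) := ⟨⟨fun _ => 0, ⟨0, fun _ _ => rfl⟩⟩⟩

instance : One (PDO R d) :=
  ⟨⟨fun n => if n = 0 then 1 else 0, ⟨0, fun n hn => if_neg (by omega)⟩⟩⟩

instance : Add (PDO R d) :=
  ⟨fun A B => ⟨fun n => A.coeff n + B.coeff n, by
    obtain ⟨N, hN⟩ := A.bdd
    obtain ⟨M, hM⟩ := B.bdd
    exact ⟨max N M, fun n hn => by
      show A.coeff n + B.coeff n = 0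
      rw [hN n (lt_of_le_of_lt (le_max_left N M) hn),
        hM n (lt_of_le_of_lt (le_max_right N M) hn), add_zero]⟩⟩⟩

instance : Neg (PDO R d) :=
  ⟨fun A => ⟨fun n => -A.coeff n, by
    obtain ⟨N, hN⟩ := A.bdd
    exact ⟨N, fun n hn => by show -A.coeff n = 0; rw [hN n hn, neg_zero]⟩⟩⟩

instance : SMul ℚ (PDO R d) :=
  ⟨fun c A => ⟨fun n => c • A.coeff n, by
    obtain ⟨N, hN⟩ := A.bdd
    exact ⟨N, fun n hn => by show c • A.coeff n = 0; rw [hN n hn, smul_zero]⟩⟩⟩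

instance : AddCommGroup (PDO R d) where
  add := (· + ·)
  zero := 0
  neg := Neg.neg
  add_assoc A B C := ext' (funext fun n => add_assoc (A.coeff n) (B.coeff n) (C.coeff n))
  zero_add A := ext' (funext fun n => zero_add (A.coeff n))
  add_zero A := ext' (funext fun n => add_zero (A.coeff n))
  add_comm A B := ext' (funext fun n => add_comm (A.coeff n) (B.coeff n))
  neg_add_cancel A := ext' (funext fun n => neg_add_cancel (A.coeff n))
  nsmul := nsmulRec
  zsmul := zsmulRec

/-- The product of pseudo-differential operators, determined by the commutation rule
`∂^k · f = Σ_{l ≥ 0} C(k,l) (∂^l f) ∂^(k-l)`. -/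
noncomputable instance : Mul (PDO R d) :=
  ⟨fun A B =>
    ⟨fun n => ∑ᶠ (k : ℤ) (m : ℤ),
        if _ : 0 ≤ k + m - n then
          A.coeff k * (gbinom k (k + m - n).toNat • (d^[(k + m - n).toNat] (B.coeff m)))
        else 0, by
      obtain ⟨N, hN⟩ := A.bdd
      obtain ⟨M, hM⟩ := B.bdd
      refine ⟨N + M, fun n hn => ?_⟩
      have hz : ∀ k m : ℤ,
          (if _ : 0 ≤ k + m - n then
            A.coeff k * (gbinom k (k + m - n).toNat • (d^[(k + m - n).toNat] (B.coeff m)))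
          else 0) = 0 := by
        intro k m
        by_cases hl : 0 ≤ k + m - n
        · rw [dif_pos hl]
          by_cases hk : N < k
          · rw [hN k hk, zero_mul]
          · rw [hM m (by omega), iterD_zero, smul_zero, mul_zero]
        · rw [dif_neg hl]
      simp only [hz, finsum_zero]⟩⟩

noncomputable def npow (A : PDO R d) : ℕ → PDO R d
  | 0 => 1
  | n + 1 => npow A n * A

noncomputable instance : Pow (PDO R d) ℕ := ⟨fun A n => A.npow n⟩

/-- The monomial `r ∂^k`. -/
def mono (r : R) (k : ℤ) : PDO R d :=
  ⟨fun n => if n = k then r else 0, ⟨k, fun n hn => if_neg (by omega)⟩⟩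

/-- The constant (order-zero) operator `r`. -/
def const (r : R) : PDO R d := mono r 0

/-- The operator `∂`. -/
def del : PDO R d := mono (1 : R) 1

/-- The operator `h∂`. -/
def hdel (h : Rˣ) : PDO R d := mono (h : R) 1

/-- The Lax operator `L = h²∂² + 2u`. -/
def Lop (h : Rˣ) (u : R) : PDO R d :=
  ⟨fun n => if n = 2 then (h : R) ^ 2 else if n = 0 then 2 * u else 0,
   ⟨2, fun n hn => by
      show (if n = 2 then (h : R) ^ 2 else if n = 0 then 2 * u else 0) = 0
      rw [if_neg (by omega), if_neg (by omega)]⟩⟩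

/-- The differential part `A₊`. -/
def pos (A : PDO R d) : PDO R d :=
  ⟨fun n => if 0 ≤ n then A.coeff n else 0, by
    obtain ⟨N, hN⟩ := A.bdd
    refine ⟨N, fun n hn => ?_⟩
    show (if 0 ≤ n then A.coeff n else 0) = 0
    by_cases h0 : (0 : ℤ) ≤ n
    · rw [if_pos h0]; exact hN n hn
    · rw [if_neg h0]⟩

/-- The integral part `A₋ = A − A₊`. -/
def negp (A : PDO R d) : PDO R d :=
  ⟨fun n => if n < 0 then A.coeff n else 0, ⟨0, fun n hn => if_neg (by omega)⟩⟩

/-- The residue `Res_∂ A = a₋₁`. -/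
def res (A : PDO R d) : R := A.coeff (-1)

/-- The formal adjoint, determined by `(f ∂^k)* = (−∂)^k · f`. -/
noncomputable def adj (A : PDO R d) : PDO R d :=
  ⟨fun n => ∑ᶠ k : ℤ,
      if _ : 0 ≤ k - n then
        (((-1 : ℚ) ^ k) * gbinom k (k - n).toNat) • (d^[(k - n).toNat] (A.coeff k))
      else 0, by
    obtain ⟨N, hN⟩ := A.bdd
    refine ⟨N, fun n hn => ?_⟩
    have hz : ∀ k : ℤ, (if _ : 0 ≤ k - n then
        (((-1 : ℚ) ^ k) * gbinom k (k - n).toNat) • (d^[(k - n).toNat] (A.coeff k))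
      else 0) = 0 := by
      intro k
      by_cases hl : 0 ≤ k - n
      · rw [dif_pos hl, hN k (by omega), iterD_zero, smul_zero]
      · rw [dif_neg hl]
    simp only [hz, finsum_zero]⟩

/-- The operator `P(h∂) = Σ pₙ hⁿ ∂ⁿ` associated to the symbol `P(λ) = Σ pₙ λⁿ`. -/
noncomputable def ofSymbol (h : Rˣ) (A : PDO R d) : PDO R d :=
  ⟨fun n => A.coeff n * ((h ^ n : Rˣ) : R), by
    obtain ⟨N, hN⟩ := A.bdd
    exact ⟨N, fun n hn => by show A.coeff n * ((h ^ n : Rˣ) : R) = 0; rw [hN n hn, zero_mul]⟩⟩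

/-- Apply `d^[i]` to each coefficient. -/
def mapD (i : ℕ) (A : PDO R d) : PDO R d :=
  ⟨fun n => d^[i] (A.coeff n), by
    obtain ⟨N, hN⟩ := A.bdd
    exact ⟨N, fun n hn => by show d^[i] (A.coeff n) = 0; rw [hN n hn, iterD_zero]⟩⟩

/-- The coefficientwise extension of an additive map `D : R →+ R`. -/
def mapHom (D : R →+ R) (A : PDO R d) : PDO R d :=
  ⟨fun n => D (A.coeff n), by
    obtain ⟨N, hN⟩ := A.bdd
    exact ⟨N, fun n hn => by show D (A.coeff n) = 0; rw [hN n hn, map_zero]⟩⟩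

/-- The commutator `[A, B] = AB − BA`. -/
noncomputable def comm (A B : PDO R d) : PDO R d := A * B - B * A

end PDO

/-- The Leibniz rule: `d` is a derivation. -/
def Leibniz {R : Type} [CommRing R] [Algebra ℚ R] (d : R →+ R) : Prop :=
  ∀ a b : R, d (a * b) = a * d b + b * d a

/-- `aₙ = 1/(2n+1)!!`. -/
def kdvA (n : ℕ) : ℚ := 1 / (Nat.doubleFactorial (2 * n + 1))

/-- `bₙ = (2n−1)!!` (with `b₀ = (−1)!! = 1`). -/
def kdvB (n : ℕ) : ℚ := (Nat.doubleFactorial (2 * n - 1) : ℕ)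

/-- Pseudo-differential operators with coefficients in the dual numbers
`R[ε]/(ε²)`: `⟨A, B⟩` represents `A + εB`. -/
structure EPDO (R : Type) [CommRing R] [Algebra ℚ R] (d : R →+ R) where
  re : PDO R d
  im : PDO R d

namespace EPDO

variable {R : Type} [CommRing R] [Algebra ℚ R] {d : R →+ R}

instance : Add (EPDO R d) := ⟨fun A B => ⟨A.re + B.re, A.im + B.im⟩⟩
instance : Neg (EPDO R d) := ⟨fun A => ⟨-A.re, -A.im⟩⟩
instance : Sub (EPDO R d) := ⟨fun A B => ⟨A.re - B.re, A.im - B.im⟩⟩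
instance : Zero (EPDO R d) := ⟨⟨0, 0⟩⟩
instance : One (EPDO R d) := ⟨⟨1, 0⟩⟩

/-- Multiplication in the dual numbers: `(A + εB)(C + εD) = AC + ε(AD + BC)`. -/
noncomputable instance : Mul (EPDO R d) :=
  ⟨fun A B => ⟨A.re * B.re, A.re * B.im + A.im * B.re⟩⟩

instance : SMul ℚ (EPDO R d) := ⟨fun c A => ⟨c • A.re, c • A.im⟩⟩

noncomputable def epow (A : EPDO R d) : ℕ → EPDO R d
  | 0 => 1
  | n + 1 => epow A n * A

noncomputable instance : Pow (EPDO R d) ℕ := ⟨fun A n => A.epow n⟩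

/-- The inclusion `Ψ(R) → Ψ(R)[ε]`. -/
def lift (A : PDO R d) : EPDO R d := ⟨A, 0⟩

/-- The square-zero formal parameter `ε`. -/
def eps : EPDO R d := ⟨0, 1⟩

/-- The adjoint, extended `ε`-linearly. -/
noncomputable def eadj (A : EPDO R d) : EPDO R d := ⟨PDO.adj A.re, PDO.adj A.im⟩

/-- The differential part, extended `ε`-linearly. -/
def epos (A : EPDO R d) : EPDO R d := ⟨PDO.pos A.re, PDO.pos A.im⟩

/-- The integral part, extended `ε`-linearly. -/
def enegp (A : EPDO R d) : EPDO R d := ⟨PDO.negp A.re, PDO.negp A.im⟩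

/-- The commutator in `Ψ(R)[ε]`. -/
noncomputable def ecomm (A B : EPDO R d) : EPDO R d := A * B - B * A

/-- The residue, with values in the dual numbers `R[ε]` (as a pair). -/
def eres (A : EPDO R d) : R × R := (PDO.res A.re, PDO.res A.im)

end EPDO

/-! ### Auxiliary lemmas for the main theorem -/

namespace GB

theorem gbinom_zero (k : ℤ) : gbinom k 0 = 1 := by simp [gbinom]

theorem gbinom_shift (x : ℤ) (s : ℕ) :
    ((s : ℚ) + 1) * gbinom x (s + 1) = (x : ℚ) * gbinom (x - 1) s := by
  unfold gbinom
  rw [Finset.prod_range_succ' (fun i => (x : ℚ) - i) s]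
  have h1 : ∀ i : ℕ, ((x : ℚ) - (i + 1 : ℕ)) = ((x - 1 : ℤ) : ℚ) - i := by
    intro i; push_cast; ring
  simp only [h1]
  rw [Nat.factorial_succ]
  have h2 : ((s+1).factorial : ℚ) ≠ 0 := by positivity
  have h3 : ((s : ℚ) + 1) ≠ 0 := by positivity
  have h4 : ((s.factorial : ℚ)) ≠ 0 := by positivity
  push_cast
  field_simp
  ring

theorem gbinom_vandermonde (t : ℕ) : ∀ (x y : ℤ),
    ∑ s ∈ Finset.range (t + 1), gbinom x s * gbinom y (t - s) = gbinom (x + y) t := by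
  induction t with
  | zero => intro x y; simp [gbinom_zero]
  | succ t ih =>
    intro x y
    have ht : ((t : ℚ) + 1) ≠ 0 := by positivity
    apply mul_left_cancel₀ ht
    have hrhs : ((t : ℚ) + 1) * gbinom (x + y) (t + 1)
        = (x : ℚ) * gbinom (x - 1 + y) t + (y : ℚ) * gbinom (x + (y - 1)) t := by
      rw [gbinom_shift (x + y) t,
        show (x - 1) + y = x + y - 1 by ring, show x + (y - 1) = x + y - 1 by ring]
      push_cast; ring
    rw [hrhs, ← ih (x-1) y, ← ih x (y-1), Finset.mul_sum, Finset.mul_sum, Finset.mul_sum]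
    -- LHS: distribute (t+1) = s + (t+1-s)
    have hsplit : ∀ s ∈ Finset.range (t + 2),
        ((t : ℚ) + 1) * (gbinom x s * gbinom y (t + 1 - s))
        = (s : ℚ) * gbinom x s * gbinom y (t + 1 - s)
          + gbinom x s * (((t + 1 - s : ℕ) : ℚ) * gbinom y (t + 1 - s)) := by
      intro s hs
      rw [Finset.mem_range] at hs
      have : ((t + 1 - s : ℕ) : ℚ) = (t : ℚ) + 1 - s := by
        have : s ≤ t + 1 := by omega
        push_cast [Nat.cast_sub this]; ring
      rw [this]; ring
    rw [Finset.sum_congr rfl hsplit, Finset.sum_add_distrib]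
    congr 1
    · -- ∑_{s∈range(t+2)} s * gb x s * gb y (t+1-s) = ∑_{s∈range(t+1)} x * (gb (x-1) s * gb y (t-s))
      rw [Finset.sum_range_succ' (fun s => (s : ℚ) * gbinom x s * gbinom y (t + 1 - s)) (t+1)]
      simp only [Nat.cast_zero, zero_mul, add_zero]
      apply Finset.sum_congr rfl
      intro s hs
      rw [Finset.mem_range] at hs
      have e : t + 1 - (s + 1) = t - s := by omega
      rw [e]
      have : ((s : ℚ) + 1) * gbinom x (s+1) = (x:ℚ) * gbinom (x-1) s := gbinom_shift x s
      push_cast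
      calc ((s:ℚ) + 1) * gbinom x (s+1) * gbinom y (t - s)
          = ((x:ℚ) * gbinom (x-1) s) * gbinom y (t-s) := by rw [this]
        _ = (x:ℚ) * (gbinom (x-1) s * gbinom y (t-s)) := by ring
    · -- second sums
      rw [Finset.sum_range_succ (fun s => gbinom x s * (((t + 1 - s : ℕ):ℚ) * gbinom y (t+1-s))) (t+1)]
      simp only [Nat.sub_self, Nat.cast_zero, zero_mul, mul_zero, add_zero]
      apply Finset.sum_congr rfl
      intro s hs
      rw [Finset.mem_range] at hs
      have e : t + 1 - s = (t - s) + 1 := by omega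
      rw [e]
      have h5 : (((t-s : ℕ) : ℚ) + 1) * gbinom y ((t-s)+1) = (y:ℚ) * gbinom (y-1) (t-s) :=
        gbinom_shift y (t-s)
      rw [show ((t - s + 1 : ℕ) : ℚ) = ((t - s : ℕ) : ℚ) + 1 by push_cast; ring]
      calc gbinom x s * ((((t-s : ℕ):ℚ) + 1) * gbinom y (t-s+1))
          = gbinom x s * ((y:ℚ) * gbinom (y-1) (t-s)) := by rw [h5]
        _ = (y:ℚ) * (gbinom x s * gbinom (y-1) (t-s)) := by ring

theorem gbinom_trisect (k : ℤ) (l q : ℕ) :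
    gbinom k (l + q) * ((l + q).choose l : ℚ) = gbinom k l * gbinom (k - l) q := by
  unfold gbinom
  rw [Finset.prod_range_add (fun i => (k : ℚ) - i) l q]
  have h1 : ∀ i : ℕ, ((k : ℚ) - (l + i : ℕ)) = ((k - l : ℤ) : ℚ) - i := by
    intro i; push_cast; ring
  simp only [h1]
  have hcn : (l+q).choose l * l.factorial * q.factorial = (l+q).factorial := by
    have h := Nat.choose_mul_factorial_mul_factorial (Nat.le_add_right l q)
    simpa using h
  have hc : ((l+q).choose l : ℚ) * (l.factorial : ℚ) * (q.factorial : ℚ) = ((l+q).factorial : ℚ) := by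
    exact_mod_cast hcn
  have h2 : ((l+q).factorial : ℚ) ≠ 0 := by positivity
  have h3 : ((l.factorial : ℚ)) ≠ 0 := by positivity
  have h4 : ((q.factorial : ℚ)) ≠ 0 := by positivity
  field_simp
  rw [← hc]
  ring

theorem key_identity (k p : ℤ) (l t : ℕ) :
    ∑ s ∈ Finset.range (t + 1), gbinom k (l + (t - s)) * ((l + (t - s)).choose l : ℚ) * gbinom p s
      = gbinom k l * gbinom (p + (k - l)) t := by
  have : ∀ s ∈ Finset.range (t+1),
      gbinom k (l + (t - s)) * ((l + (t - s)).choose l : ℚ) * gbinom p s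
      = gbinom k l * (gbinom p s * gbinom (k - l) (t - s)) := by
    intro s hs
    rw [gbinom_trisect k l (t - s)]
    ring
  rw [Finset.sum_congr rfl this, ← Finset.mul_sum, gbinom_vandermonde t p (k - l)]

end GB

namespace KPAux

open PDO

variable {R : Type} [CommRing R] [Algebra ℚ R] {d : R →+ R}

theorem iterD_add (d : R →+ R) (j : ℕ) (x y : R) :
    d^[j] (x + y) = d^[j] x + d^[j] y := by
  induction j with
  | zero => rfl
  | succ j ih => rw [Function.iterate_succ_apply', Function.iterate_succ_apply',
      Function.iterate_succ_apply', ih, map_add]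

theorem iterD_smul (d : R →+ R) (j : ℕ) (c : ℚ) (x : R) :
    d^[j] (c • x) = c • d^[j] x := by
  induction j with
  | zero => rfl
  | succ j ih => rw [Function.iterate_succ_apply', Function.iterate_succ_apply',
      ih, map_rat_smul]

theorem iterD_neg (d : R →+ R) (j : ℕ) (x : R) : d^[j] (-x) = -d^[j] x := by
  induction j with
  | zero => rfl
  | succ j ih => rw [Function.iterate_succ_apply', Function.iterate_succ_apply',
      ih, map_neg]

theorem d_one (hd : Leibniz d) : d (1 : R) = 0 := by
  have h : d (1 : R) = d 1 + d 1 := by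
    have h := hd 1 1
    rwa [mul_one, one_mul] at h
  have h2 : d (1 : R) + d 1 = d 1 + 0 := by rw [add_zero]; exact h.symm
  exact add_left_cancel h2

/-- Iterated Leibniz rule (binomial formula). -/
theorem leibniz_iter (hd : Leibniz d) (u : ℕ) (x y : R) :
    d^[u] (x * y) = ∑ v ∈ Finset.range (u + 1),
      ((u.choose v : ℚ)) • (d^[v] x * d^[u - v] y) := by
  induction u with
  | zero => simp
  | succ u ih =>
    rw [Function.iterate_succ_apply', ih]
    have hmap : d (∑ v ∈ Finset.range (u + 1), ((u.choose v : ℚ)) • (d^[v] x * d^[u - v] y))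
        = ∑ v ∈ Finset.range (u + 1), ((u.choose v : ℚ)) •
            (d^[v] x * d^[u - v + 1] y + d^[v + 1] x * d^[u - v] y) := by
      rw [map_sum]
      apply Finset.sum_congr rfl
      intro v hv
      rw [map_rat_smul]
      congr 1
      rw [hd (d^[v] x) (d^[u-v] y), ← Function.iterate_succ_apply' d,
        ← Function.iterate_succ_apply' d]
      ring
    rw [hmap]
    have hsplit : ∀ v ∈ Finset.range (u+1), ((u.choose v : ℚ)) •
          (d^[v] x * d^[u - v + 1] y + d^[v + 1] x * d^[u - v] y)
        = ((u.choose v : ℚ)) • (d^[v] x * d^[u - v + 1] y)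
          + ((u.choose v : ℚ)) • (d^[v + 1] x * d^[u - v] y) := by
      intro v hv; rw [smul_add]
    rw [Finset.sum_congr rfl hsplit, Finset.sum_add_distrib]
    -- second sum: reindex
    have h2 : ∑ v ∈ Finset.range (u+1), ((u.choose v : ℚ)) • (d^[v+1] x * d^[u-v] y)
        = ∑ v ∈ Finset.range (u+2), (if v = 0 then 0 else ((u.choose (v-1) : ℚ))) •
            (d^[v] x * d^[u+1-v] y) := by
      rw [Finset.sum_range_succ' (fun v => (if v = 0 then (0:ℚ) else ((u.choose (v-1) : ℚ))) •
            (d^[v] x * d^[u+1-v] y)) (u+1)]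
      simp only [if_pos rfl, eq_self_iff_true, if_true, zero_smul, add_zero]
      apply Finset.sum_congr rfl
      intro v hv
      rw [Finset.mem_range] at hv
      have e1 : v + 1 - 1 = v := by omega
      have e2 : u + 1 - (v + 1) = u - v := by omega
      rw [if_neg (by omega), e1, e2]
    have h1 : ∑ v ∈ Finset.range (u+1), ((u.choose v : ℚ)) • (d^[v] x * d^[u-v+1] y)
        = ∑ v ∈ Finset.range (u+2), (if v = u + 1 then 0 else ((u.choose v : ℚ))) •
            (d^[v] x * d^[u+1-v] y) := by
      rw [Finset.sum_range_succ (fun v => (if v = u+1 then (0:ℚ) else ((u.choose v : ℚ))) •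
            (d^[v] x * d^[u+1-v] y)) (u+1)]
      simp only [if_pos rfl, eq_self_iff_true, if_true, zero_smul, add_zero]
      apply Finset.sum_congr rfl
      intro v hv
      rw [Finset.mem_range] at hv
      have e2 : u + 1 - v = u - v + 1 := by omega
      rw [if_neg (by omega), e2]
    rw [h1, h2, ← Finset.sum_add_distrib]
    apply Finset.sum_congr rfl
    intro v hv
    rw [Finset.mem_range] at hv
    rw [← add_smul]
    congr 1
    by_cases hv0 : v = 0
    · subst hv0; simp
    · obtain ⟨w, rfl⟩ : ∃ w, v = w + 1 := ⟨v - 1, by omega⟩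
      rw [if_neg hv0]
      simp only [Nat.add_sub_cancel]
      by_cases hvu : w + 1 = u + 1
      · have hw : w = u := by omega
        subst hw
        rw [if_pos rfl, zero_add, Nat.choose_self, Nat.choose_self]
      · rw [if_neg hvu, Nat.choose_succ_succ]
        push_cast; ring

/-- The generic term in the product formula. -/
noncomputable def S (A B : PDO R d) (n k : ℤ) (l : ℕ) : R :=
  A.coeff k * (gbinom k l • d^[l] (B.coeff (n - k + l)))

theorem mul_coeff (A B : PDO R d) (n : ℤ) :
    (A * B).coeff n = ∑ᶠ (k : ℤ) (m : ℤ),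
      if _ : 0 ≤ k + m - n then
        A.coeff k * (gbinom k (k + m - n).toNat • (d^[(k + m - n).toNat] (B.coeff m)))
      else 0 := rfl

theorem S_ne_zero {A B : PDO R d} {n k : ℤ} {l : ℕ} (h : S A B n k l ≠ 0) :
    A.coeff k ≠ 0 ∧ B.coeff (n - k + l) ≠ 0 := by
  constructor
  · intro h0; exact h (by simp [S, h0])
  · intro h0; exact h (by simp [S, h0, PDO.iterD_zero])

theorem mul_coeff_sum (A B : PDO R d) (n : ℤ) (s : Finset ℤ) (L : ℕ)
    (hcond : ∀ k l, S A B n k l ≠ 0 → k ∈ s ∧ l < L) :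
    (A * B).coeff n = ∑ k ∈ s, ∑ l ∈ Finset.range L, S A B n k l := by
  rw [mul_coeff]
  have hD : ∀ k m : ℤ, (if _ : 0 ≤ k + m - n then
        A.coeff k * (gbinom k (k + m - n).toNat • (d^[(k + m - n).toNat] (B.coeff m)))
      else 0) = if 0 ≤ k + m - n then S A B n k (k + m - n).toNat else 0 := by
    intro k m
    by_cases hkm : 0 ≤ k + m - n
    · rw [dif_pos hkm, if_pos hkm]
      unfold S
      have e : n - k + ((k + m - n).toNat : ℤ) = m := by omega
      rw [e]
    · rw [dif_neg hkm, if_neg hkm]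
  have hinner : ∀ k : ℤ, (∑ᶠ m : ℤ, if _ : 0 ≤ k + m - n then
        A.coeff k * (gbinom k (k + m - n).toNat • (d^[(k + m - n).toNat] (B.coeff m)))
      else 0) = ∑ l ∈ Finset.range L, S A B n k l := by
    intro k
    have h1 : (∑ᶠ m : ℤ, if _ : 0 ≤ k + m - n then
        A.coeff k * (gbinom k (k + m - n).toNat • (d^[(k + m - n).toNat] (B.coeff m)))
      else 0) = ∑ m ∈ Finset.image (fun l : ℕ => n - k + l) (Finset.range L),
        (if 0 ≤ k + m - n then S A B n k (k + m - n).toNat else 0) := by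
      simp only [hD]
      apply finsum_eq_sum_of_support_subset
      intro m hm
      simp only [Function.mem_support] at hm
      by_cases hkm : 0 ≤ k + m - n
      · rw [if_pos hkm] at hm
        obtain ⟨_, hl⟩ := hcond k _ hm
        simp only [Finset.coe_image, Set.mem_image, Finset.mem_coe, Finset.mem_range]
        exact ⟨(k + m - n).toNat, hl, by omega⟩
      · rw [if_neg hkm] at hm; exact absurd rfl hm
    rw [h1, Finset.sum_image (by intro a _ b _ hab; have hab' : n - k + (a:ℤ) = n - k + (b:ℤ) := hab; omega)]
    apply Finset.sum_congr rfl
    intro l _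
    have h2 : 0 ≤ k + (n - k + l) - n := by omega
    rw [if_pos h2]
    congr 1
    omega
  simp only [hinner]
  apply finsum_eq_sum_of_support_subset
  intro k hk
  simp only [Function.mem_support] at hk
  by_contra hks
  apply hk
  apply Finset.sum_eq_zero
  intro l _
  by_contra hS
  exact hks (hcond k l hS).1

/-- Coefficients of products vanish above the sum of the bounds. -/
theorem mul_bdd {A B : PDO R d} {a b : ℤ} (hA : ∀ k, a < k → A.coeff k = 0)
    (hB : ∀ m, b < m → B.coeff m = 0) {n : ℤ} (hn : a + b < n) :
    (A * B).coeff n = 0 := by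
  rw [mul_coeff_sum A B n ∅ 0 ?_]
  · simp
  · intro k l hS
    obtain ⟨h1, h2⟩ := S_ne_zero hS
    by_contra
    have hka : k ≤ a := by by_contra hk; exact h1 (hA k (by omega))
    have hmb : n - k + l ≤ b := by by_contra hm; exact h2 (hB _ (by omega))
    omega


theorem coeff_add (A B : PDO R d) (n : ℤ) : (A + B).coeff n = A.coeff n + B.coeff n := rfl
theorem coeff_neg (A : PDO R d) (n : ℤ) : (-A).coeff n = -A.coeff n := rfl
theorem coeff_zero (n : ℤ) : (0 : PDO R d).coeff n = 0 := rfl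
theorem coeff_one (n : ℤ) : (1 : PDO R d).coeff n = if n = 0 then 1 else 0 := rfl

theorem gbinom_zero_left (l : ℕ) : gbinom 0 (l + 1) = 0 := by
  unfold gbinom
  rw [Finset.prod_eq_zero (Finset.mem_range.mpr (Nat.succ_pos l)) (by norm_num)]
  simp

theorem iterD_one (hd : Leibniz d) (l : ℕ) : d^[l + 1] (1 : R) = 0 := by
  induction l with
  | zero => simpa using d_one hd
  | succ l ih => rw [Function.iterate_succ_apply', ih, map_zero]

theorem zero_mul' (B : PDO R d) : (0 : PDO R d) * B = 0 := by
  apply PDO.ext'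
  funext n
  rw [mul_coeff_sum 0 B n ∅ 0 (fun k l hS => absurd rfl (S_ne_zero hS).1)]
  simp [coeff_zero]

theorem mul_zero' (A : PDO R d) : A * (0 : PDO R d) = 0 := by
  apply PDO.ext'
  funext n
  rw [mul_coeff_sum A 0 n ∅ 0 (fun k l hS => absurd rfl (S_ne_zero hS).2)]
  simp [coeff_zero]

theorem one_mul' (B : PDO R d) : (1 : PDO R d) * B = B := by
  apply PDO.ext'
  funext n
  obtain ⟨b, hb⟩ := B.bdd
  rw [mul_coeff_sum 1 B n {0} ((b - n + 1).toNat + 1) ?_]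
  · rw [Finset.sum_singleton]
    rw [Finset.sum_eq_single 0]
    · simp [S, gbinom, coeff_one]
    · intro l _ hl
      obtain ⟨l', rfl⟩ : ∃ l', l = l' + 1 := ⟨l - 1, by omega⟩
      simp [S, gbinom_zero_left]
    · intro habs
      exact absurd (Finset.mem_range.mpr (by omega)) habs
  · intro k l hS
    obtain ⟨h1, h2⟩ := S_ne_zero hS
    rw [coeff_one] at h1
    have hk : k = 0 := by by_contra hk; rw [if_neg hk] at h1; exact h1 rfl
    subst hk
    refine ⟨Finset.mem_singleton_self 0, ?_⟩
    have : n - 0 + l ≤ b := by by_contra hc; exact h2 (hb _ (by omega))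
    omega

theorem mul_one' (hd : Leibniz d) (A : PDO R d) : A * (1 : PDO R d) = A := by
  apply PDO.ext'
  funext n
  obtain ⟨a, ha⟩ := A.bdd
  set s : Finset ℤ := Finset.Icc n (max a n) with hs
  set L : ℕ := (a - n + 1).toNat + 1 with hL
  rw [mul_coeff_sum A 1 n s L ?_]
  · have hS : ∀ k ∈ s, ∀ l ∈ Finset.range L, S A 1 n k l
        = if k = n ∧ l = 0 then A.coeff n else 0 := by
      intro k _ l _
      unfold S
      rw [coeff_one]
      by_cases hm : n - k + l = 0
      · rw [if_pos hm]
        match l with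
        | 0 =>
          have hk : k = n := by omega
          subst hk
          simp [gbinom]
        | l' + 1 =>
          rw [iterD_one hd]
          simp
      · rw [if_neg hm, if_neg (by rintro ⟨rfl, rfl⟩; omega)]
        simp [PDO.iterD_zero]
    rw [Finset.sum_congr rfl (fun k hk => Finset.sum_congr rfl (fun l hl => hS k hk l hl))]
    rw [Finset.sum_eq_single n]
    · rw [Finset.sum_eq_single 0]
      · simp
      · intro l _ hl; rw [if_neg (by tauto)]
      · intro habs; exact absurd (Finset.mem_range.mpr (by omega)) habs
    · intro k _ hk
      apply Finset.sum_eq_zero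
      intro l _
      rw [if_neg (by tauto)]
    · intro habs
      exact absurd (Finset.mem_Icc.mpr ⟨le_refl n, le_max_right a n⟩) habs
  · intro k l hS
    obtain ⟨h1, h2⟩ := S_ne_zero hS
    rw [coeff_one] at h2
    have hm : n - k + l = 0 := by by_contra hc; rw [if_neg hc] at h2; exact h2 rfl
    have hka : k ≤ a := by by_contra hc; exact h1 (ha k (by omega))
    constructor
    · rw [hs, Finset.mem_Icc]
      omega
    · omega

theorem S_add (A B C : PDO R d) (n k : ℤ) (l : ℕ) :
    S A (B + C) n k l = S A B n k l + S A C n k l := by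
  unfold S
  rw [coeff_add, iterD_add, smul_add, mul_add]

theorem mul_add' (A B C : PDO R d) : A * (B + C) = A * B + A * C := by
  apply PDO.ext'
  funext n
  obtain ⟨a, ha⟩ := A.bdd
  obtain ⟨b, hb⟩ := B.bdd
  obtain ⟨c, hc⟩ := C.bdd
  set m : ℤ := max b c with hm
  set s : Finset ℤ := Finset.Icc (n - m) a with hs
  set L : ℕ := (a + m - n + 1).toNat with hL
  have hcond : ∀ (D : PDO R d) (e : ℤ), (∀ j, e < j → D.coeff j = 0) → e ≤ m →
      ∀ k l, S A D n k l ≠ 0 → k ∈ s ∧ l < L := by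
    intro D e hD hem k l hS
    obtain ⟨h1, h2⟩ := S_ne_zero hS
    have hka : k ≤ a := by by_contra hk; exact h1 (ha k (by omega))
    have hme : n - k + l ≤ e := by by_contra hk; exact h2 (hD _ (by omega))
    constructor
    · rw [hs, Finset.mem_Icc]; omega
    · omega
  have hBC : ∀ j, m < j → (B + C).coeff j = 0 := by
    intro j hj
    rw [coeff_add, hb j (by omega), hc j (by omega), add_zero]
  rw [coeff_add,
    mul_coeff_sum A (B + C) n s L (hcond _ m hBC le_rfl),
    mul_coeff_sum A B n s L (hcond _ b hb (le_max_left b c)),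
    mul_coeff_sum A C n s L (hcond _ c hc (le_max_right b c)),
    ← Finset.sum_add_distrib]
  apply Finset.sum_congr rfl
  intro k _
  rw [← Finset.sum_add_distrib]
  exact Finset.sum_congr rfl (fun l _ => S_add A B C n k l)

theorem mul_neg' (A B : PDO R d) : A * (-B) = -(A * B) := by
  apply PDO.ext'
  funext n
  obtain ⟨a, ha⟩ := A.bdd
  obtain ⟨b, hb⟩ := B.bdd
  set s : Finset ℤ := Finset.Icc (n - b) a with hs
  set L : ℕ := (a + b - n + 1).toNat with hL
  have hnB : ∀ j, b < j → (-B).coeff j = 0 := by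
    intro j hj; rw [coeff_neg, hb j hj, neg_zero]
  have hcond : ∀ (D : PDO R d), (∀ j, b < j → D.coeff j = 0) →
      ∀ k l, S A D n k l ≠ 0 → k ∈ s ∧ l < L := by
    intro D hD k l hS
    obtain ⟨h1, h2⟩ := S_ne_zero hS
    have hka : k ≤ a := by by_contra hk; exact h1 (ha k (by omega))
    have hme : n - k + l ≤ b := by by_contra hk; exact h2 (hD _ (by omega))
    constructor
    · rw [hs, Finset.mem_Icc]; omega
    · omega
  rw [coeff_neg, mul_coeff_sum A (-B) n s L (hcond _ hnB),
    mul_coeff_sum A B n s L (hcond _ hb), ← Finset.sum_neg_distrib]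
  apply Finset.sum_congr rfl
  intro k _
  rw [← Finset.sum_neg_distrib]
  apply Finset.sum_congr rfl
  intro l _
  unfold S
  rw [coeff_neg, iterD_neg, smul_neg, mul_neg]


theorem smul_helper1 (α β : ℚ) (x y z : R) :
    (x * (α • y)) * (β • z) = (α * β) • (x * (y * z)) := by
  rw [mul_smul_comm α x y, smul_mul_assoc α (x*y) (β • z), mul_smul_comm β (x*y) z,
    smul_smul, mul_assoc]

/-- Normal form for `((A*B)*C).coeff n`. -/
theorem lhs_eq (A B C : PDO R d) (n a b c : ℤ)
    (ha : ∀ k, a < k → A.coeff k = 0) (hb : ∀ k, b < k → B.coeff k = 0)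
    (hc : ∀ k, c < k → C.coeff k = 0) :
    ((A * B) * C).coeff n
      = ∑ x ∈ ((Finset.Icc (n - b - c) a ×ˢ Finset.Icc (n - a - c) b) ×ˢ
          (Finset.range (a + b + c - n + 1).toNat ×ˢ Finset.range (a + b + c - n + 1).toNat)),
          (gbinom x.1.1 x.2.1 * gbinom (x.1.1 + x.1.2 - x.2.1) x.2.2) •
            (A.coeff x.1.1 * (d^[x.2.1] (B.coeff x.1.2) *
              d^[x.2.2] (C.coeff (n - x.1.1 - x.1.2 + x.2.1 + x.2.2)))) := by
  set L : ℕ := (a + b + c - n + 1).toNat with hLdef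
  have hAB : ∀ j, a + b < j → (A * B).coeff j = 0 := fun j hj => mul_bdd ha hb hj
  -- step 1
  rw [mul_coeff_sum (A * B) C n (Finset.Icc (n - c) (a + b)) L ?_]
  swap
  · intro K t hS
    obtain ⟨h1, h2⟩ := S_ne_zero hS
    have hK : K ≤ a + b := by by_contra hk; exact h1 (hAB K (by omega))
    have ht : n - K + t ≤ c := by by_contra hk; exact h2 (hc _ (by omega))
    exact ⟨Finset.mem_Icc.mpr (by omega), by omega⟩
  -- step 2 and 3: expand the inner coefficient and multiply out
  have step3 : ∀ K ∈ Finset.Icc (n - c) (a + b), ∀ t ∈ Finset.range L,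
      S (A * B) C n K t = ∑ k ∈ Finset.Icc (n - b - c) a, ∑ l ∈ Finset.range L,
        S A B K k l * (gbinom K t • d^[t] (C.coeff (n - K + t))) := by
    intro K hK t _
    rw [Finset.mem_Icc] at hK
    have h2 : (A * B).coeff K = ∑ k ∈ Finset.Icc (n - b - c) a, ∑ l ∈ Finset.range L,
        S A B K k l := by
      apply mul_coeff_sum
      intro k l hS
      obtain ⟨h1, h2⟩ := S_ne_zero hS
      have hka : k ≤ a := by by_contra hk; exact h1 (ha k (by omega))
      have hlb : K - k + l ≤ b := by by_contra hk; exact h2 (hb _ (by omega))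
      exact ⟨Finset.mem_Icc.mpr (by omega), by omega⟩
    show (A * B).coeff K * (gbinom K t • d^[t] (C.coeff (n - K + t))) = _
    rw [h2, Finset.sum_mul]
    exact Finset.sum_congr rfl (fun k _ => by rw [Finset.sum_mul])
  rw [Finset.sum_congr rfl (fun K hK => Finset.sum_congr rfl (fun t ht => step3 K hK t ht))]
  -- flatten to a single product sum
  rw [← Finset.sum_product' (s := Finset.Icc (n - c) (a + b)) (t := Finset.range L)]
  have flat : ∀ K t, (∑ k ∈ Finset.Icc (n - b - c) a, ∑ l ∈ Finset.range L,
        S A B K k l * (gbinom K t • d^[t] (C.coeff (n - K + t))))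
      = ∑ y ∈ Finset.Icc (n - b - c) a ×ˢ Finset.range L,
          S A B K y.1 y.2 * (gbinom K t • d^[t] (C.coeff (n - K + t))) := by
    intro K t
    rw [← Finset.sum_product']
  simp only [flat]
  rw [← Finset.sum_product' (s := (Finset.Icc (n - c) (a + b) ×ˢ Finset.range L))
    (t := Finset.Icc (n - b - c) a ×ˢ Finset.range L)
    (f := fun x y => S A B x.1 y.1 y.2 * (gbinom x.1 x.2 • d^[x.2] (C.coeff (n - x.1 + x.2))))]
  -- now a single sum over ((K,t),(k,l)); reindex to ((k,p),(l,t))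
  apply Finset.sum_bij_ne_zero
    (i := fun x _ _ => ((x.2.1, x.1.1 - x.2.1 + (x.2.2 : ℤ)), (x.2.2, x.1.2)))
  · -- maps into target
    rintro ⟨⟨K, t⟩, ⟨k, l⟩⟩ hmem hne
    simp only [Finset.mem_product, Finset.mem_Icc, Finset.mem_range] at hmem ⊢
    obtain ⟨⟨⟨hK1, hK2⟩, ht⟩, ⟨⟨hk1, hk2⟩, hl⟩⟩ := hmem
    have hSne : S A B K k l ≠ 0 := by
      intro h0; apply hne; simp [h0]
    have hCne : C.coeff (n - K + t) ≠ 0 := by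
      intro h0; apply hne; simp [h0, PDO.iterD_zero]
    obtain ⟨h1, h2⟩ := S_ne_zero hSne
    have hlb : K - k + l ≤ b := by by_contra hx; exact h2 (hb _ (by omega))
    have htc : n - K + t ≤ c := by by_contra hx; exact hCne (hc _ (by omega))
    refine ⟨⟨⟨hk1, hk2⟩, ?_, ?_⟩, hl, ht⟩ <;> omega
  · -- injective
    rintro ⟨⟨K₁, t₁⟩, ⟨k₁, l₁⟩⟩ _ _ ⟨⟨K₂, t₂⟩, ⟨k₂, l₂⟩⟩ _ _ heq
    simp only [Prod.mk.injEq] at heq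
    obtain ⟨⟨e1, e2⟩, e3, e4⟩ := heq
    subst e1; subst e3; subst e4
    have : K₁ = K₂ := by omega
    subst this
    rfl
  · -- surjective
    rintro ⟨⟨k, p⟩, ⟨l, t⟩⟩ hmem hne
    simp only [Finset.mem_product, Finset.mem_Icc, Finset.mem_range] at hmem
    obtain ⟨⟨⟨hk1, hk2⟩, hp1, hp2⟩, hl, ht⟩ := hmem
    have hCne : C.coeff (n - k - p + l + t) ≠ 0 := by
      intro h0; apply hne; simp [h0, PDO.iterD_zero]
    have hq : n - k - p + l + t ≤ c := by by_contra hx; exact hCne (hc _ (by omega))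
    have hval : S A B (k + p - (l:ℤ)) k l *
          (gbinom (k + p - (l:ℤ)) t • d^[t] (C.coeff (n - (k + p - (l:ℤ)) + t)))
        = (gbinom k l * gbinom (k + p - (l:ℤ)) t) •
            (A.coeff k * (d^[l] (B.coeff p) *
              d^[t] (C.coeff (n - k - p + l + t)))) := by
      unfold S
      rw [smul_helper1]
      have e1 : (k + p - (l:ℤ)) - k + (l:ℤ) = p := by ring
      have e2 : n - (k + p - (l:ℤ)) + (t:ℤ) = n - k - p + l + t := by ring
      rw [e1, e2]
    refine ⟨((k + p - (l:ℤ), t), (k, l)), ?_, ?_, ?_⟩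
    · simp only [Finset.mem_product, Finset.mem_Icc, Finset.mem_range]
      exact ⟨⟨⟨by omega, by omega⟩, ht⟩, ⟨hk1, hk2⟩, hl⟩
    · show S A B (k + p - (l:ℤ)) k l * _ ≠ 0
      rw [hval]
      exact hne
    · show ((k, (k + p - (l:ℤ)) - k + (l:ℤ)), ((l:ℕ), t)) = ((k, p), (l, t))
      have : (k + p - (l:ℤ)) - k + (l:ℤ) = p := by ring
      rw [this]
  · -- values agree
    rintro ⟨⟨K, t⟩, ⟨k, l⟩⟩ hmem hne
    simp only [Finset.mem_product, Finset.mem_Icc, Finset.mem_range] at hmem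
    show S A B K k l * (gbinom K t • d^[t] (C.coeff (n - K + t)))
        = (gbinom k l * gbinom (k + (K - k + (l:ℤ)) - l) t) •
            (A.coeff k * (d^[l] (B.coeff (K - k + (l:ℤ))) *
              d^[t] (C.coeff (n - k - (K - k + (l:ℤ)) + l + t))))
    unfold S
    rw [smul_helper1]
    have e1 : k + (K - k + (l:ℤ)) - l = K := by ring
    have e2 : n - k - (K - k + (l:ℤ)) + (l:ℤ) + (t:ℤ) = n - K + t := by ring
    rw [e1, e2]


theorem iterD_sum {ι : Type} (d : R →+ R) (j : ℕ) (s : Finset ι) (f : ι → R) :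
    d^[j] (∑ i ∈ s, f i) = ∑ i ∈ s, d^[j] (f i) := by
  induction s using Finset.cons_induction with
  | empty => simp [PDO.iterD_zero]
  | cons i s hi ih => rw [Finset.sum_cons, Finset.sum_cons, iterD_add, ih]

theorem smul_helper2 (α γ β : ℚ) (x y z : R) :
    x * (α • (γ • (y * (β • z)))) = (α * γ * β) • (x * (y * z)) := by
  rw [mul_smul_comm β y z, smul_smul, smul_smul]
  exact mul_smul_comm (α * γ * β) x (y * z)

/-- Normal form for `(A*(B*C)).coeff n`. -/
theorem rhs_eq (hd : Leibniz d) (A B C : PDO R d) (n a b c : ℤ)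
    (ha : ∀ k, a < k → A.coeff k = 0) (hb : ∀ k, b < k → B.coeff k = 0)
    (hc : ∀ k, c < k → C.coeff k = 0) :
    (A * (B * C)).coeff n
      = ∑ x ∈ ((Finset.Icc (n - b - c) a ×ˢ Finset.Icc (n - a - c) b) ×ˢ
          (Finset.range (a + b + c - n + 1).toNat ×ˢ Finset.range (a + b + c - n + 1).toNat)),
          (gbinom x.1.1 x.2.1 * gbinom (x.1.1 + x.1.2 - x.2.1) x.2.2) •
            (A.coeff x.1.1 * (d^[x.2.1] (B.coeff x.1.2) *
              d^[x.2.2] (C.coeff (n - x.1.1 - x.1.2 + x.2.1 + x.2.2)))) := by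
  set L : ℕ := (a + b + c - n + 1).toNat with hLdef
  have hBC : ∀ j, b + c < j → (B * C).coeff j = 0 := fun j hj => mul_bdd hb hc hj
  rw [mul_coeff_sum A (B * C) n (Finset.Icc (n - b - c) a) L ?_]
  swap
  · intro k u hS
    obtain ⟨h1, h2⟩ := S_ne_zero hS
    have hka : k ≤ a := by by_contra hx; exact h1 (ha k (by omega))
    have hu : n - k + u ≤ b + c := by by_contra hx; exact h2 (hBC _ (by omega))
    exact ⟨Finset.mem_Icc.mpr (by omega), by omega⟩
  have expand : ∀ k ∈ Finset.Icc (n - b - c) a, ∀ u ∈ Finset.range L,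
      S A (B * C) n k u = ∑ y ∈ (Finset.Icc (n - a - c) b ×ˢ Finset.range L) ×ˢ Finset.range L,
        (gbinom k u * ((u.choose y.2 : ℚ)) * gbinom y.1.1 y.1.2) •
          (A.coeff k * (d^[y.2] (B.coeff y.1.1) *
            d^[u - y.2 + y.1.2] (C.coeff (n - k + u - y.1.1 + y.1.2)))) := by
    intro k hk u hu
    rw [Finset.mem_Icc] at hk
    rw [Finset.mem_range] at hu
    have hexp : (B * C).coeff (n - k + u) = ∑ y ∈ Finset.Icc (n - a - c) b ×ˢ Finset.range L,
        S B C (n - k + u) y.1 y.2 := by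
      rw [mul_coeff_sum B C (n - k + u) (Finset.Icc (n - a - c) b) L ?_]
      · rw [← Finset.sum_product']
      · intro p s' hS
        obtain ⟨h1, h2⟩ := S_ne_zero hS
        have hpb : p ≤ b := by by_contra hx; exact h1 (hb p (by omega))
        have hsc : (n - k + u) - p + s' ≤ c := by by_contra hx; exact h2 (hc _ (by omega))
        exact ⟨Finset.mem_Icc.mpr (by omega), by omega⟩
    show A.coeff k * (gbinom k u • d^[u] ((B * C).coeff (n - k + u))) = _
    rw [hexp, iterD_sum, Finset.smul_sum, Finset.mul_sum,
      Finset.sum_product' (s := Finset.Icc (n - a - c) b ×ˢ Finset.range L)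
        (t := Finset.range L)
        (f := fun i v => (gbinom k u * ((u.choose v : ℚ)) * gbinom i.1 i.2) •
          (A.coeff k * (d^[v] (B.coeff i.1) *
            d^[u - v + i.2] (C.coeff (n - k + u - i.1 + i.2)))))]
    apply Finset.sum_congr rfl
    rintro ⟨p, s'⟩ _
    have step : A.coeff k * (gbinom k u • d^[u] (S B C (n - k + ↑u) p s'))
        = ∑ v ∈ Finset.range (u+1), (gbinom k u * ((u.choose v : ℚ)) * gbinom p s') •
            (A.coeff k * (d^[v] (B.coeff p) *
              d^[u - v + s'] (C.coeff (n - k + ↑u - p + ↑s')))) := by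
      unfold S
      rw [leibniz_iter hd u, Finset.smul_sum, Finset.mul_sum]
      apply Finset.sum_congr rfl
      intro v _
      rw [iterD_smul, ← Function.iterate_add_apply, smul_helper2]
    rw [step]
    apply Finset.sum_subset (Finset.range_subset_range.mpr (by omega))
    intro v _ hv
    rw [Finset.mem_range] at hv
    rw [Nat.choose_eq_zero_of_lt (by omega)]
    simp
  rw [Finset.sum_congr rfl (fun k hk => Finset.sum_congr rfl (fun u hu => expand k hk u hu))]
  rw [← Finset.sum_product' (s := Finset.Icc (n - b - c) a) (t := Finset.range L)
    (f := fun k u => ∑ y ∈ (Finset.Icc (n - a - c) b ×ˢ Finset.range L) ×ˢ Finset.range L,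
      (gbinom k u * ((u.choose y.2 : ℚ)) * gbinom y.1.1 y.1.2) •
        (A.coeff k * (d^[y.2] (B.coeff y.1.1) *
          d^[u - y.2 + y.1.2] (C.coeff (n - k + u - y.1.1 + y.1.2)))))]
  rw [← Finset.sum_product' (s := Finset.Icc (n - b - c) a ×ˢ Finset.range L)
    (t := (Finset.Icc (n - a - c) b ×ˢ Finset.range L) ×ˢ Finset.range L)
    (f := fun x y => (gbinom x.1 x.2 * ((x.2.choose y.2 : ℚ)) * gbinom y.1.1 y.1.2) •
      (A.coeff x.1 * (d^[y.2] (B.coeff y.1.1) *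
        d^[x.2 - y.2 + y.1.2] (C.coeff (n - x.1 + x.2 - y.1.1 + y.1.2)))))]
  -- reindex ((k,u),((p,s'),v)) ↦ ((k,p),((v, u-v+s'), s'))
  have hbij : (∑ z ∈ (Finset.Icc (n - b - c) a ×ˢ Finset.range L) ×ˢ
        ((Finset.Icc (n - a - c) b ×ˢ Finset.range L) ×ˢ Finset.range L),
        (gbinom z.1.1 z.1.2 * ((z.1.2.choose z.2.2 : ℚ)) * gbinom z.2.1.1 z.2.1.2) •
          (A.coeff z.1.1 * (d^[z.2.2] (B.coeff z.2.1.1) *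
            d^[z.1.2 - z.2.2 + z.2.1.2] (C.coeff (n - z.1.1 + z.1.2 - z.2.1.1 + z.2.1.2)))))
      = ∑ w ∈ (Finset.Icc (n - b - c) a ×ˢ Finset.Icc (n - a - c) b) ×ˢ
          ((Finset.range L ×ˢ Finset.range L) ×ˢ Finset.range L),
        if w.2.2 ≤ w.2.1.2 then
          (gbinom w.1.1 (w.2.1.1 + (w.2.1.2 - w.2.2)) *
            (((w.2.1.1 + (w.2.1.2 - w.2.2)).choose w.2.1.1 : ℚ)) * gbinom w.1.2 w.2.2) •
            (A.coeff w.1.1 * (d^[w.2.1.1] (B.coeff w.1.2) *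
              d^[w.2.1.2] (C.coeff (n - w.1.1 - w.1.2 + w.2.1.1 + w.2.1.2))))
        else 0 := by
    apply Finset.sum_bij_ne_zero
      (i := fun z _ _ => ((z.1.1, z.2.1.1), ((z.2.2, z.1.2 - z.2.2 + z.2.1.2), z.2.1.2)))
    · rintro ⟨⟨k, u⟩, ⟨⟨p, s'⟩, v⟩⟩ hmem hne
      simp only [Finset.mem_product, Finset.mem_Icc, Finset.mem_range] at hmem ⊢
      obtain ⟨⟨⟨hk1, hk2⟩, hu⟩, ⟨⟨hp1, hp2⟩, hs⟩, hv⟩ := hmem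
      have hvu : v ≤ u := by
        by_contra hx
        apply hne
        show (gbinom k u * ((u.choose v : ℚ)) * gbinom p s') • _ = 0
        rw [Nat.choose_eq_zero_of_lt (by omega)]
        simp
      have hCne : C.coeff (n - k + u - p + s') ≠ 0 := by
        intro h0; apply hne
        show (gbinom k u * ((u.choose v : ℚ)) * gbinom p s') • _ = 0
        rw [h0, PDO.iterD_zero]
        simp
      have hq : n - k + u - p + s' ≤ c := by by_contra hx; exact hCne (hc _ (by omega))
      exact ⟨⟨⟨hk1, hk2⟩, hp1, hp2⟩, ⟨hv, by omega⟩, hs⟩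
    · rintro ⟨⟨k₁, u₁⟩, ⟨⟨p₁, s₁⟩, v₁⟩⟩ _ hne₁ ⟨⟨k₂, u₂⟩, ⟨⟨p₂, s₂⟩, v₂⟩⟩ _ hne₂ heq
      have hvu₁ : v₁ ≤ u₁ := by
        by_contra hx
        apply hne₁
        show (gbinom k₁ u₁ * ((u₁.choose v₁ : ℚ)) * gbinom p₁ s₁) • _ = 0
        rw [Nat.choose_eq_zero_of_lt (by omega)]
        simp
      have hvu₂ : v₂ ≤ u₂ := by
        by_contra hx
        apply hne₂
        show (gbinom k₂ u₂ * ((u₂.choose v₂ : ℚ)) * gbinom p₂ s₂) • _ = 0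
        rw [Nat.choose_eq_zero_of_lt (by omega)]
        simp
      simp only [Prod.mk.injEq] at heq
      obtain ⟨⟨e1, e2⟩, ⟨e3, e4⟩, e5⟩ := heq
      subst e1; subst e2; subst e3; subst e5
      have : u₁ = u₂ := by omega
      subst this
      rfl
    · rintro ⟨⟨k, p⟩, ⟨⟨l, t⟩, s⟩⟩ hmem hne
      simp only [Finset.mem_product, Finset.mem_Icc, Finset.mem_range] at hmem
      obtain ⟨⟨⟨hk1, hk2⟩, hp1, hp2⟩, ⟨hl, ht⟩, hs⟩ := hmem
      have hst : s ≤ t := by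
        by_contra hx
        exact hne (if_neg hx)
      rw [if_pos hst] at hne
      have hCne : C.coeff (n - k - p + l + t) ≠ 0 := by
        intro h0; apply hne
        rw [h0, PDO.iterD_zero]
        simp
      have hq : n - k - p + l + t ≤ c := by by_contra hx; exact hCne (hc _ (by omega))
      refine ⟨((k, l + (t - s)), ((p, s), l)), ?_, ?_, ?_⟩
      · simp only [Finset.mem_product, Finset.mem_Icc, Finset.mem_range]
        exact ⟨⟨⟨hk1, hk2⟩, by omega⟩, ⟨⟨hp1, hp2⟩, by omega⟩, by omega⟩
      · show (gbinom k (l + (t - s)) * (((l + (t - s)).choose l : ℚ)) * gbinom p s) • _ ≠ 0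
        have e1 : l + (t - s) - l + s = t := by omega
        have e2 : n - k + (↑(l + (t - s)) : ℤ) - p + (s : ℤ) = n - k - p + l + t := by
          push_cast [Nat.cast_sub (by omega : s ≤ t)]; ring
        rw [e1, e2]
        exact hne
      · show ((k, p), ((l, l + (t - s) - l + s), s)) = ((k, p), ((l, t), s))
        have e1 : l + (t - s) - l + s = t := by omega
        rw [e1]
    · rintro ⟨⟨k, u⟩, ⟨⟨p, s'⟩, v⟩⟩ hmem hne
      simp only [Finset.mem_product, Finset.mem_Icc, Finset.mem_range] at hmem
      have hvu : v ≤ u := by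
        by_contra hx
        apply hne
        show (gbinom k u * ((u.choose v : ℚ)) * gbinom p s') • _ = 0
        rw [Nat.choose_eq_zero_of_lt (by omega)]
        simp
      rw [if_pos (by omega : s' ≤ u - v + s')]
      have e1 : v + (u - v + s' - s') = u := by omega
      have e2 : n - k - p + (v:ℤ) + ((u - v + s' : ℕ) : ℤ) = n - k + u - p + s' := by
        push_cast [Nat.cast_sub hvu]; ring
      rw [e1, e2]
  rw [hbij]
  -- collapse the s-sum via the key identity
  rw [Finset.sum_product' (s := Finset.Icc (n - b - c) a ×ˢ Finset.Icc (n - a - c) b)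
    (t := (Finset.range L ×ˢ Finset.range L) ×ˢ Finset.range L)
    (f := fun w1 w2 => if w2.2 ≤ w2.1.2 then
      (gbinom w1.1 (w2.1.1 + (w2.1.2 - w2.2)) *
        (((w2.1.1 + (w2.1.2 - w2.2)).choose w2.1.1 : ℚ)) * gbinom w1.2 w2.2) •
        (A.coeff w1.1 * (d^[w2.1.1] (B.coeff w1.2) *
          d^[w2.1.2] (C.coeff (n - w1.1 - w1.2 + w2.1.1 + w2.1.2))))
      else 0)]
  rw [Finset.sum_product' (s := Finset.Icc (n - b - c) a ×ˢ Finset.Icc (n - a - c) b)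
    (t := Finset.range L ×ˢ Finset.range L)
    (f := fun w1 lt => (gbinom w1.1 lt.1 * gbinom (w1.1 + w1.2 - lt.1) lt.2) •
      (A.coeff w1.1 * (d^[lt.1] (B.coeff w1.2) *
        d^[lt.2] (C.coeff (n - w1.1 - w1.2 + lt.1 + lt.2)))))]
  apply Finset.sum_congr rfl
  rintro ⟨k, p⟩ _
  rw [Finset.sum_product' (s := Finset.range L ×ˢ Finset.range L) (t := Finset.range L)
    (f := fun lt s => if s ≤ lt.2 then
      (gbinom k (lt.1 + (lt.2 - s)) * (((lt.1 + (lt.2 - s)).choose lt.1 : ℚ)) * gbinom p s) •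
        (A.coeff k * (d^[lt.1] (B.coeff p) *
          d^[lt.2] (C.coeff (n - k - p + lt.1 + lt.2))))
      else 0)]
  apply Finset.sum_congr rfl
  rintro ⟨l, t⟩ hlt
  simp only [Finset.mem_product, Finset.mem_range] at hlt
  have hsub : Finset.range (t + 1) ⊆ Finset.range L := Finset.range_subset_range.mpr (by omega)
  rw [← Finset.sum_subset hsub (by
    intro s _ hs
    rw [Finset.mem_range] at hs
    exact if_neg (by omega))]
  have hpos : ∀ s ∈ Finset.range (t + 1), (if s ≤ t then
      (gbinom k (l + (t - s)) * (((l + (t - s)).choose l : ℚ)) * gbinom p s) •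
        (A.coeff k * (d^[l] (B.coeff p) * d^[t] (C.coeff (n - k - p + l + t))))
      else 0)
      = (gbinom k (l + (t - s)) * (((l + (t - s)).choose l : ℚ)) * gbinom p s) •
        (A.coeff k * (d^[l] (B.coeff p) * d^[t] (C.coeff (n - k - p + l + t)))) := by
    intro s hs
    rw [Finset.mem_range] at hs
    exact if_pos (by omega)
  dsimp only
  rw [Finset.sum_congr rfl hpos, ← Finset.sum_smul, GB.key_identity k p l t,
    show p + (k - (l:ℤ)) = k + p - l by ring]

theorem mul_assoc' (hd : Leibniz d) (A B C : PDO R d) : A * B * C = A * (B * C) := by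
  apply PDO.ext'
  funext n
  obtain ⟨a, ha⟩ := A.bdd
  obtain ⟨b, hb⟩ := B.bdd
  obtain ⟨c, hc⟩ := C.bdd
  rw [lhs_eq A B C n a b c ha hb hc, rhs_eq hd A B C n a b c ha hb hc]

/-- Monic of order zero. -/
def isM (A : PDO R d) : Prop := A.coeff 0 = 1 ∧ ∀ n : ℤ, 0 < n → A.coeff n = 0

theorem coeff_pos' (A : PDO R d) (n : ℤ) :
    (PDO.pos A).coeff n = if 0 ≤ n then A.coeff n else 0 := rfl

theorem coeff_negp (A : PDO R d) (n : ℤ) :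
    (PDO.negp A).coeff n = if n < 0 then A.coeff n else 0 := rfl

theorem isM_of_pos {P : PDO R d} (hP : PDO.pos P = 1) : isM P := by
  have h := fun n => congrFun (congrArg PDO.coeff hP) n
  constructor
  · have h0 := h 0
    rw [coeff_pos', coeff_one] at h0
    simpa using h0
  · intro n hn
    have hn' := h n
    rw [coeff_pos', coeff_one, if_pos (le_of_lt hn), if_neg (by omega)] at hn'
    exact hn'

theorem pos_eq_one_of_isM {A : PDO R d} (hA : isM A) : PDO.pos A = 1 := by
  apply PDO.ext'
  funext n
  rw [coeff_pos', coeff_one]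
  by_cases h0 : n = 0
  · subst h0; simp [hA.1]
  · by_cases hpos : 0 ≤ n
    · rw [if_pos hpos, hA.2 n (by omega), if_neg h0]
    · rw [if_neg hpos, if_neg h0]

theorem pos_add_negp (A : PDO R d) : PDO.pos A + PDO.negp A = A := by
  apply PDO.ext'
  funext n
  rw [coeff_add, coeff_pos', coeff_negp]
  by_cases h : 0 ≤ n
  · rw [if_pos h, if_neg (by omega), add_zero]
  · rw [if_neg h, if_pos (by omega), zero_add]

theorem isM_mul {A B : PDO R d} (hA : isM A) (hB : isM B) : isM (A * B) := by
  constructor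
  · rw [mul_coeff_sum A B 0 {0} 1 ?_]
    · rw [Finset.sum_singleton, Finset.sum_range_one]
      simp [S, GB.gbinom_zero, hA.1, hB.1]
    · intro k l hS
      obtain ⟨h1, h2⟩ := S_ne_zero hS
      have hk : k ≤ 0 := by by_contra hk; exact h1 (hA.2 k (by omega))
      have hl : 0 - k + l ≤ 0 := by by_contra hc; exact h2 (hB.2 _ (by omega))
      exact ⟨Finset.mem_singleton.mpr (by omega), by omega⟩
  · intro n hn
    rw [mul_coeff_sum A B n ∅ 0 ?_]
    · simp
    · intro k l hS
      obtain ⟨h1, h2⟩ := S_ne_zero hS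
      have hk : k ≤ 0 := by by_contra hk; exact h1 (hA.2 k (by omega))
      have hl : n - k + l ≤ 0 := by by_contra hc; exact h2 (hB.2 _ (by omega))
      exact absurd rfl (by omega : ¬ (0:ℤ) = 0)

theorem mul_eq_zero_cancel {A Z : PDO R d} (hA : isM A) (hZ : A * Z = 0) : Z = 0 := by
  by_contra hne
  have hex : ∃ n : ℤ, Z.coeff n ≠ 0 := by
    by_contra hx
    push_neg at hx
    exact hne (PDO.ext' (funext fun n => hx n))
  obtain ⟨N, hN⟩ := Z.bdd
  obtain ⟨n₀, hn₀, hub⟩ := Int.exists_greatest_of_bdd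
    (P := fun n => Z.coeff n ≠ 0)
    ⟨N, fun z hz => by by_contra hc; exact hz (hN z (by omega))⟩ hex
  have hcoeff : (A * Z).coeff n₀ = Z.coeff n₀ := by
    rw [mul_coeff_sum A Z n₀ {0} 1 ?_]
    · rw [Finset.sum_singleton, Finset.sum_range_one]
      simp [S, GB.gbinom_zero, hA.1]
    · intro k l hS
      obtain ⟨h1, h2⟩ := S_ne_zero hS
      have hk : k ≤ 0 := by by_contra hk; exact h1 (hA.2 k (by omega))
      have hl : n₀ - k + l ≤ n₀ := hub _ h2
      exact ⟨Finset.mem_singleton.mpr (by omega), by omega⟩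
  rw [hZ, coeff_zero] at hcoeff
  exact hn₀ hcoeff.symm

theorem mul_cancel_left (hd : Leibniz d) {A X Y : PDO R d} (hA : isM A)
    (h : A * X = A * Y) : X = Y := by
  have h0 : A * (X + (-Y)) = 0 := by
    rw [mul_add', mul_neg', h, add_neg_cancel]
  have := mul_eq_zero_cancel hA h0
  exact add_neg_eq_zero.mp this

theorem isM_adj {P : PDO R d} (hP : isM P) : isM (PDO.adj P) := by
  have hcoeff : ∀ n : ℤ, (PDO.adj P).coeff n = ∑ᶠ k : ℤ,
      (if _ : 0 ≤ k - n then
        (((-1 : ℚ) ^ k) * gbinom k (k - n).toNat) • (d^[(k - n).toNat] (P.coeff k))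
      else 0) := fun n => rfl
  constructor
  · rw [hcoeff 0, finsum_eq_single _ 0 ?_]
    · rw [dif_pos (by omega)]
      simp [hP.1, GB.gbinom_zero]
    · intro k hk
      by_cases h0 : 0 ≤ k - 0
      · rw [dif_pos h0, hP.2 k (by omega), PDO.iterD_zero, smul_zero]
      · rw [dif_neg h0]
  · intro n hn
    rw [hcoeff n]
    have hz : ∀ k : ℤ, (if _ : 0 ≤ k - n then
        (((-1 : ℚ) ^ k) * gbinom k (k - n).toNat) • (d^[(k - n).toNat] (P.coeff k))
      else 0) = 0 := by
      intro k
      by_cases h0 : 0 ≤ k - n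
      · rw [dif_pos h0, hP.2 k (by omega), PDO.iterD_zero, smul_zero]
      · rw [dif_neg h0]
    simp only [hz, finsum_zero]

theorem epdo_ext {A B : EPDO R d} (h1 : A.re = B.re) (h2 : A.im = B.im) : A = B := by
  cases A; cases B; cases h1; cases h2; rfl

theorem lift_add_eps (P Q : PDO R d) :
    EPDO.lift P + EPDO.eps * EPDO.lift Q = (⟨P, Q⟩ : EPDO R d) := by
  apply epdo_ext
  · show P + (0 : PDO R d) * Q = P
    rw [zero_mul', add_zero]
  · show (0 : PDO R d) + ((0 : PDO R d) * 0 + 1 * Q) = Q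
    rw [mul_zero', one_mul', zero_add, zero_add]

theorem eps_mul_lift (X : PDO R d) :
    EPDO.eps * EPDO.lift X = (⟨0, X⟩ : EPDO R d) := by
  apply epdo_ext
  · show (0 : PDO R d) * X = 0
    exact zero_mul' X
  · show (0 : PDO R d) * 0 + 1 * X = X
    rw [mul_zero', one_mul', zero_add]

end KPAux



/-- First order expansion of the adjoint: if `((P+εQ)(P+εQ)*)₋ = 0` with `P₊ = 1`, then
`P* + εQ* = P⁻¹(1 − εQP⁻¹ + ε(QP⁻¹ + PQ*)₊)`. -/
theorem first_order_adjoint_formula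
    (R : Type) [CommRing R] [Algebra ℚ R] (d : R →+ R)
    (hd : Leibniz d) (h : Rˣ) (hdh : d (h : R) = 0)
    (P Q Pinv : PDO R d) (hP : PDO.pos P = 1)
    (hPinv : P * Pinv = 1 ∧ Pinv * P = 1)
    (hbil : EPDO.enegp ((EPDO.lift P + EPDO.eps * EPDO.lift Q)
        * EPDO.eadj (EPDO.lift P + EPDO.eps * EPDO.lift Q)) = 0) :
    EPDO.eadj (EPDO.lift P + EPDO.eps * EPDO.lift Q)
      = EPDO.lift Pinv * (1 - EPDO.eps * EPDO.lift (Q * Pinv)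
          + EPDO.eps * EPDO.lift (PDO.pos (Q * Pinv + P * PDO.adj Q))) := by
  rw [KPAux.lift_add_eps] at hbil ⊢
  have h1 : PDO.negp (P * PDO.adj P) = 0 := congrArg EPDO.re hbil
  have h2 : PDO.negp (P * PDO.adj Q + Q * PDO.adj P) = 0 := congrArg EPDO.im hbil
  have hMP : KPAux.isM P := KPAux.isM_of_pos hP
  have hMadj : KPAux.isM (PDO.adj P) := KPAux.isM_adj hMP
  have hMprod : KPAux.isM (P * PDO.adj P) := KPAux.isM_mul hMP hMadj
  have hPP : P * PDO.adj P = 1 := by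
    rw [← KPAux.pos_add_negp (P * PDO.adj P), h1, add_zero,
      KPAux.pos_eq_one_of_isM hMprod]
  have hadjP : PDO.adj P = Pinv :=
    KPAux.mul_cancel_left hd hMP (by rw [hPP, hPinv.1])
  rw [hadjP] at h2
  rw [KPAux.eps_mul_lift, KPAux.eps_mul_lift]
  have hW : PDO.pos (P * PDO.adj Q + Q * Pinv) = P * PDO.adj Q + Q * Pinv := by
    have hp := KPAux.pos_add_negp (P * PDO.adj Q + Q * Pinv)
    rw [h2, add_zero] at hp
    exact hp
  apply KPAux.epdo_ext
  · show PDO.adj P = Pinv * ((1 : PDO R d) - 0 + 0)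
    rw [sub_zero, add_zero, KPAux.mul_one' hd, hadjP]
  · show PDO.adj Q = Pinv * ((0 : PDO R d) - Q * Pinv
        + PDO.pos (Q * Pinv + P * PDO.adj Q)) + (0 : PDO R d) * ((1 : PDO R d) - 0 + 0)
    rw [KPAux.zero_mul', add_zero, zero_sub, add_comm (Q * Pinv) (P * PDO.adj Q), hW]
    have habel : -(Q * Pinv) + (P * PDO.adj Q + Q * Pinv) = P * PDO.adj Q := by abel
    rw [habel, ← KPAux.mul_assoc' hd, hPinv.2, KPAux.one_mul']
end

section
/- Let P, Q be pseudo-differential operators with coefficients in the dual numbers R[ε]/(ε²), with P₊ = 1, and suppose that both ( (P + εQ)(P + εQ)* )₋ = 0 and ( (P + εQ) · h²∂² · (P + εQ)* )₋ = 0 hold. Then the operator L_G := P · h²∂² · P⁻¹ satisfies L_G = (L_G)₊ + ε [ (L_G)₊ , Q P⁻¹ ]₋; in particular (L_G)₋ is a multiple of ε and equals ε [ (L_G)₊ , Q P⁻¹ ]₋. -/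
open scoped BigOperators

/-! ### Auxiliary gbinom lemmas -/

lemma gbinom_zero' (k : ℤ) : gbinom k 0 = 1 := by simp [gbinom]

lemma gbinom_nat_eq_zero {k : ℤ} {l : ℕ} (h0 : 0 ≤ k) (h : k < l) : gbinom k l = 0 := by
  have h1 : ((k.toNat : ℤ) : ℚ) = (k : ℚ) := by rw [Int.toNat_of_nonneg h0]
  push_cast at h1
  have hz : ((k:ℚ) - (k.toNat : ℕ)) = 0 := by rw [h1]; ring
  have hmem : (k.toNat : ℕ) ∈ Finset.range l := by rw [Finset.mem_range]; omega
  rw [gbinom, Finset.prod_eq_zero hmem hz, zero_div]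

lemma descPochhammer_smeval_int (k : ℤ) (l : ℕ) :
    (descPochhammer ℤ l).smeval (k:ℚ) = ∏ i ∈ Finset.range l, ((k : ℚ) - i) := by
  induction l with
  | zero => simp [descPochhammer_zero, Polynomial.smeval_one]
  | succ l ih =>
      rw [descPochhammer_succ_right, Polynomial.smeval_mul, ih, Finset.prod_range_succ]
      congr 1
      simp [Polynomial.smeval_sub, Polynomial.smeval_X, Polynomial.smeval_natCast]

lemma gbinom_eq_choose (k : ℤ) (l : ℕ) : gbinom k l = Ring.choose (k:ℚ) l := by
  have h := Ring.descPochhammer_eq_factorial_smul_choose (R := ℚ) (k:ℚ) l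
  rw [descPochhammer_smeval_int] at h
  rw [gbinom, h, nsmul_eq_mul]
  have h1 : (l.factorial : ℚ) ≠ 0 := by positivity
  field_simp

lemma gbinom_vandermonde (x y : ℤ) (l : ℕ) :
    gbinom (x + y) l = ∑ i ∈ Finset.range (l+1), gbinom x i * gbinom y (l - i) := by
  rw [gbinom_eq_choose]
  push_cast
  rw [Ring.add_choose_eq l (Commute.all _ _)]
  rw [Finset.Nat.sum_antidiagonal_eq_sum_range_succ
    (fun a b => Ring.choose (x:ℚ) a * Ring.choose (y:ℚ) b)]
  exact Finset.sum_congr rfl fun i _ => by rw [gbinom_eq_choose, gbinom_eq_choose]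

lemma gbinom_subset (k : ℤ) (a b : ℕ) :
    gbinom k (a + b) * ((a+b).choose a : ℚ) = gbinom k a * gbinom (k - a) b := by
  have hprod : ∏ i ∈ Finset.range (a + b), ((k : ℚ) - i)
      = (∏ i ∈ Finset.range a, ((k : ℚ) - i)) * ∏ i ∈ Finset.range b, (((k - a : ℤ) : ℚ) - i) := by
    rw [Finset.prod_range_add]
    congr 1
    exact Finset.prod_congr rfl fun i _ => by push_cast; ring
  have hab : a + b - a = b := by omega
  have hch : ((a+b).choose a : ℚ) = ((a+b).factorial : ℚ) / (a.factorial * b.factorial) := by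
    rw [Nat.cast_choose ℚ (Nat.le_add_right a b), hab]
  rw [gbinom, gbinom, gbinom, hprod, hch]
  have h1 : (a.factorial : ℚ) ≠ 0 := by positivity
  have h2 : (b.factorial : ℚ) ≠ 0 := by positivity
  have h3 : ((a+b).factorial : ℚ) ≠ 0 := by positivity
  field_simp

namespace PDO

variable {R : Type} [CommRing R] [Algebra ℚ R] {d : R →+ R}

set_option linter.unusedSectionVars false

/-! ### Basic coefficient lemmas -/

lemma coeff_zero (n : ℤ) : (0 : PDO R d).coeff n = 0 := rfl
lemma coeff_one (n : ℤ) : (1 : PDO R d).coeff n = if n = 0 then 1 else 0 := rfl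
lemma coeff_add (A B : PDO R d) (n : ℤ) : (A + B).coeff n = A.coeff n + B.coeff n := rfl
lemma coeff_neg (A : PDO R d) (n : ℤ) : (-A).coeff n = -A.coeff n := rfl
lemma coeff_sub (A B : PDO R d) (n : ℤ) : (A - B).coeff n = A.coeff n - B.coeff n := by
  rw [sub_eq_add_neg, coeff_add, coeff_neg, sub_eq_add_neg]

lemma coeff_mono (r : R) (k n : ℤ) : (mono (d := d) r k).coeff n = if n = k then r else 0 := rfl

/-- The coefficient extraction as an additive hom. -/
def coeffHom (n : ℤ) : PDO R d →+ R where
  toFun A := A.coeff n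
  map_zero' := rfl
  map_add' _ _ := rfl

lemma coeff_sum {ι : Type*} (s : Finset ι) (F : ι → PDO R d) (n : ℤ) :
    (∑ i ∈ s, F i).coeff n = ∑ i ∈ s, (F i).coeff n :=
  map_sum (coeffHom n) F s

/-! ### Boundedness -/

def Bdd (A : PDO R d) (N : ℤ) : Prop := ∀ n, N < n → A.coeff n = 0

lemma bdd_mono (r : R) (k : ℤ) : Bdd (mono (d := d) r k) k :=
  fun n hn => if_neg (by omega)

lemma bdd_one : Bdd (1 : PDO R d) 0 := fun n hn => if_neg (by omega)

lemma bdd_add {A B : PDO R d} {N : ℤ} (hA : Bdd A N) (hB : Bdd B N) : Bdd (A + B) N :=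
  fun n hn => by rw [coeff_add, hA n hn, hB n hn, add_zero]

lemma bdd_neg {A : PDO R d} {N : ℤ} (hA : Bdd A N) : Bdd (-A) N :=
  fun n hn => by rw [coeff_neg, hA n hn, neg_zero]

lemma bdd_sub {A B : PDO R d} {N : ℤ} (hA : Bdd A N) (hB : Bdd B N) : Bdd (A - B) N :=
  fun n hn => by rw [coeff_sub, hA n hn, hB n hn, sub_zero]

lemma bdd_mono_le {A : PDO R d} {N M : ℤ} (hA : Bdd A N) (h : N ≤ M) : Bdd A M :=
  fun n hn => hA n (by omega)

/-! ### The product coefficients -/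

/-- The summand appearing in the definition of the product. -/
def dterm (A B : PDO R d) (n k m : ℤ) : R :=
  if _ : 0 ≤ k + m - n then
    A.coeff k * (gbinom k (k + m - n).toNat • (d^[(k + m - n).toNat] (B.coeff m)))
  else 0

lemma coeff_mul (A B : PDO R d) (n : ℤ) :
    (A * B).coeff n = ∑ᶠ (k : ℤ) (m : ℤ), dterm A B n k m := rfl

lemma dterm_eq_zero_left {A B : PDO R d} {n k m : ℤ} (h : A.coeff k = 0) :
    dterm A B n k m = 0 := by
  unfold dterm
  split
  · rw [h, zero_mul]
  · rfl

lemma dterm_eq_zero_right {A B : PDO R d} {n k m : ℤ} (h : B.coeff m = 0) :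
    dterm A B n k m = 0 := by
  unfold dterm
  split
  · rw [h, iterD_zero, smul_zero, mul_zero]
  · rfl

lemma dterm_eq_zero_low {A B : PDO R d} {n k m : ℤ} (h : k + m < n) :
    dterm A B n k m = 0 := by
  unfold dterm
  rw [dif_neg (by omega)]

end PDO
namespace PDO

variable {R : Type} [CommRing R] [Algebra ℚ R] {d : R →+ R}

set_option linter.unusedSectionVars false

lemma iterD_add (l : ℕ) (a b : R) : d^[l] (a + b) = d^[l] a + d^[l] b := by
  induction l with
  | zero => rfl
  | succ l ih => rw [Function.iterate_succ_apply', Function.iterate_succ_apply',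
      Function.iterate_succ_apply', ih, map_add]

lemma iterD_smul (l : ℕ) (c : ℚ) (a : R) : d^[l] (c • a) = c • d^[l] a := by
  induction l with
  | zero => rfl
  | succ l ih => rw [Function.iterate_succ_apply', Function.iterate_succ_apply', ih,
      map_rat_smul]

lemma finsum_dterm_inner (A B : PDO R d) {NB : ℤ} (hB : Bdd B NB) (n k : ℤ)
    {t : Finset ℕ} (ht : Finset.range ((k + NB - n).toNat + 1) ⊆ t) :
    ∑ᶠ m, dterm A B n k m = ∑ l ∈ t, A.coeff k * (gbinom k l • d^[l] (B.coeff (n - k + l))) := by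
  have hinj : Set.InjOn (fun l : ℕ => n - k + l) ↑t := by
    intro l1 _ l2 _ he
    simp only at he
    omega
  have hsupp : Function.support (fun m => dterm A B n k m)
      ⊆ ↑(t.image (fun l : ℕ => n - k + l)) := by
    intro m hm
    simp only [Function.mem_support] at hm
    by_cases h0 : 0 ≤ k + m - n
    · by_cases hmB : NB < m
      · exact absurd (dterm_eq_zero_right (hB m hmB)) hm
      · push_neg at hmB
        have hl : (k + m - n).toNat ∈ Finset.range ((k + NB - n).toNat + 1) := by
          rw [Finset.mem_range]
          omega
        simp only [Finset.coe_image, Set.mem_image, Finset.mem_coe]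
        exact ⟨(k + m - n).toNat, ht hl, by omega⟩
    · exact absurd (dterm_eq_zero_low (by omega)) hm
  rw [finsum_eq_sum_of_support_subset _ hsupp, Finset.sum_image hinj]
  refine Finset.sum_congr rfl fun l _ => ?_
  have he : k + (n - k + (l:ℤ)) - n = (l:ℤ) := by ring
  unfold dterm
  rw [dif_pos (by omega)]
  congr 2 <;> rw [he] <;> rw [Int.toNat_natCast]

/-- Master formula: the product coefficient as a finite double sum, with flexible index sets. -/
lemma coeff_mul_eq {A B : PDO R d} {NA NB : ℤ} (hA : Bdd A NA) (hB : Bdd B NB) (n : ℤ)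
    {s : Finset ℤ} {t : Finset ℕ}
    (hs : ∀ k, A.coeff k ≠ 0 → n - NB ≤ k → k ∈ s)
    (ht : Finset.range ((NA + NB - n).toNat + 1) ⊆ t) :
    (A * B).coeff n
      = ∑ k ∈ s, ∑ l ∈ t, A.coeff k * (gbinom k l • d^[l] (B.coeff (n - k + l))) := by
  rw [coeff_mul]
  have h1 : ∀ k, ∑ᶠ m, dterm A B n k m
      = ∑ l ∈ Finset.range ((k + NB - n).toNat + 1),
          A.coeff k * (gbinom k l • d^[l] (B.coeff (n - k + l))) :=
    fun k => finsum_dterm_inner A B hB n k (subset_refl _)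
  rw [finsum_congr h1]
  have hsupp : Function.support (fun k => ∑ l ∈ Finset.range ((k + NB - n).toNat + 1),
      A.coeff k * (gbinom k l • d^[l] (B.coeff (n - k + l)))) ⊆ ↑s := by
    intro k hk
    simp only [Function.mem_support] at hk
    by_cases hAk : A.coeff k = 0
    · exact absurd (Finset.sum_eq_zero fun l _ => by rw [hAk, zero_mul]) hk
    · by_cases hkn : n - NB ≤ k
      · exact hs k hAk hkn
      · refine absurd (Finset.sum_eq_zero fun l _ => ?_) hk
        rw [hB (n - k + l) (by omega), iterD_zero, smul_zero, mul_zero]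
  rw [finsum_eq_sum_of_support_subset _ hsupp]
  refine Finset.sum_congr rfl fun k hk => ?_
  by_cases hAk : A.coeff k = 0
  · rw [Finset.sum_eq_zero fun l _ => by rw [hAk, zero_mul],
      Finset.sum_eq_zero fun l _ => by rw [hAk, zero_mul]]
  · have hkNA : k ≤ NA := by
      by_contra hc
      exact hAk (hA k (by omega))
    refine Finset.sum_subset (fun l hl => ht ?_) (fun l _ hl => ?_)
    · rw [Finset.mem_range] at hl ⊢
      omega
    · rw [Finset.mem_range, not_lt] at hl
      rw [hB (n - k + l) (by omega), iterD_zero, smul_zero, mul_zero]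

lemma coeff_mul_eq_zero_left {A B : PDO R d} {NB : ℤ} (hB : Bdd B NB) {n : ℤ}
    (hA : ∀ k, n - NB ≤ k → A.coeff k = 0) : (A * B).coeff n = 0 := by
  rw [coeff_mul]
  have hz : ∀ k m, dterm A B n k m = 0 := by
    intro k m
    by_cases hm : NB < m
    · exact dterm_eq_zero_right (hB m hm)
    · by_cases hk : n - NB ≤ k
      · exact dterm_eq_zero_left (hA k hk)
      · exact dterm_eq_zero_low (by omega)
  simp only [hz, finsum_zero]

lemma coeff_mul_eq_zero_right {A B : PDO R d} {NA : ℤ} (hA : Bdd A NA) {n : ℤ}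
    (hB : ∀ m, n - NA ≤ m → B.coeff m = 0) : (A * B).coeff n = 0 := by
  rw [coeff_mul]
  have hz : ∀ k m, dterm A B n k m = 0 := by
    intro k m
    by_cases hk : NA < k
    · exact dterm_eq_zero_left (hA k hk)
    · by_cases hm : n - NA ≤ m
      · exact dterm_eq_zero_right (hB m hm)
      · exact dterm_eq_zero_low (by omega)
  simp only [hz, finsum_zero]

lemma bdd_mul {A B : PDO R d} {NA NB : ℤ} (hA : Bdd A NA) (hB : Bdd B NB) :
    Bdd (A * B) (NA + NB) := by
  intro n hn
  exact coeff_mul_eq_zero_left hB (fun k hk => hA k (by omega))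

lemma zero_mul' (A : PDO R d) : 0 * A = 0 := by
  refine ext' (funext fun n => ?_)
  obtain ⟨N, hN⟩ := A.bdd
  exact coeff_mul_eq_zero_left hN (fun k _ => rfl)

lemma mul_zero' (A : PDO R d) : A * 0 = 0 := by
  refine ext' (funext fun n => ?_)
  obtain ⟨N, hN⟩ := A.bdd
  exact coeff_mul_eq_zero_right hN (fun m _ => rfl)

lemma add_mul' (A B C : PDO R d) : (A + B) * C = A * C + B * C := by
  refine ext' (funext fun n => ?_)
  obtain ⟨NA, hNA⟩ := A.bdd
  obtain ⟨NB, hNB⟩ := B.bdd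
  obtain ⟨NC, hNC⟩ := C.bdd
  have hNA' : Bdd A (NA ⊔ NB) := bdd_mono_le hNA le_sup_left
  have hNB' : Bdd B (NA ⊔ NB) := bdd_mono_le hNB le_sup_right
  have hAB : Bdd (A + B) (NA ⊔ NB) := bdd_add hNA' hNB'
  rw [coeff_add,
    coeff_mul_eq hAB hNC n (s := Finset.Icc (n - NC) (NA ⊔ NB))
      (fun k _ hk => by rw [Finset.mem_Icc]; exact ⟨hk, by_contra fun hc => by
        simp [hAB k (by omega)] at *⟩) (subset_refl _),
    coeff_mul_eq hNA' hNC n (s := Finset.Icc (n - NC) (NA ⊔ NB))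
      (fun k hk0 hk => by rw [Finset.mem_Icc]; exact ⟨hk, by_contra fun hc =>
        hk0 (hNA' k (by omega))⟩) (subset_refl _),
    coeff_mul_eq hNB' hNC n (s := Finset.Icc (n - NC) (NA ⊔ NB))
      (fun k hk0 hk => by rw [Finset.mem_Icc]; exact ⟨hk, by_contra fun hc =>
        hk0 (hNB' k (by omega))⟩) (subset_refl _),
    ← Finset.sum_add_distrib]
  refine Finset.sum_congr rfl fun k _ => ?_
  rw [← Finset.sum_add_distrib]
  refine Finset.sum_congr rfl fun l _ => ?_
  rw [coeff_add, add_mul]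

lemma mul_add' (A B C : PDO R d) : A * (B + C) = A * B + A * C := by
  refine ext' (funext fun n => ?_)
  obtain ⟨NA, hNA⟩ := A.bdd
  obtain ⟨NB, hNB⟩ := B.bdd
  obtain ⟨NC, hNC⟩ := C.bdd
  have hNB' : Bdd B (NB ⊔ NC) := bdd_mono_le hNB le_sup_left
  have hNC' : Bdd C (NB ⊔ NC) := bdd_mono_le hNC le_sup_right
  have hBC : Bdd (B + C) (NB ⊔ NC) := bdd_add hNB' hNC'
  have hs : ∀ k, A.coeff k ≠ 0 → n - (NB ⊔ NC) ≤ k → k ∈ Finset.Icc (n - (NB ⊔ NC)) NA :=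
    fun k hk0 hk => by
      rw [Finset.mem_Icc]
      exact ⟨hk, by_contra fun hc => hk0 (hNA k (by omega))⟩
  rw [coeff_add,
    coeff_mul_eq hNA hBC n hs (subset_refl _),
    coeff_mul_eq hNA hNB' n hs (subset_refl _),
    coeff_mul_eq hNA hNC' n hs (subset_refl _),
    ← Finset.sum_add_distrib]
  refine Finset.sum_congr rfl fun k _ => ?_
  rw [← Finset.sum_add_distrib]
  refine Finset.sum_congr rfl fun l _ => ?_
  rw [coeff_add, iterD_add, smul_add, mul_add]

lemma neg_mul' (A B : PDO R d) : (-A) * B = -(A * B) := by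
  have h := add_mul' A (-A) B
  rw [add_neg_cancel, zero_mul'] at h
  exact eq_neg_of_add_eq_zero_right h.symm

lemma mul_neg' (A B : PDO R d) : A * (-B) = -(A * B) := by
  have h := mul_add' A B (-B)
  rw [add_neg_cancel, mul_zero'] at h
  exact eq_neg_of_add_eq_zero_right h.symm

lemma sub_mul' (A B C : PDO R d) : (A - B) * C = A * C - B * C := by
  rw [sub_eq_add_neg, add_mul', neg_mul', ← sub_eq_add_neg]

lemma mul_sub' (A B C : PDO R d) : A * (B - C) = A * B - A * C := by
  rw [sub_eq_add_neg, mul_add', mul_neg', ← sub_eq_add_neg]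

/-- Right multiplication as an additive hom. -/
noncomputable def mulRightHom (B : PDO R d) : PDO R d →+ PDO R d where
  toFun A := A * B
  map_zero' := zero_mul' B
  map_add' A A' := add_mul' A A' B

/-- Left multiplication as an additive hom. -/
noncomputable def mulLeftHom (A : PDO R d) : PDO R d →+ PDO R d where
  toFun B := A * B
  map_zero' := mul_zero' A
  map_add' B B' := mul_add' A B B'

lemma sum_mul' {ι : Type*} (s : Finset ι) (F : ι → PDO R d) (B : PDO R d) :
    (∑ i ∈ s, F i) * B = ∑ i ∈ s, F i * B :=
  map_sum (mulRightHom B) F s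

lemma mul_sum' {ι : Type*} (s : Finset ι) (F : ι → PDO R d) (A : PDO R d) :
    A * (∑ i ∈ s, F i) = ∑ i ∈ s, A * F i :=
  map_sum (mulLeftHom A) F s

end PDO
namespace PDO

variable {R : Type} [CommRing R] [Algebra ℚ R] {d : R →+ R}

set_option linter.unusedSectionVars false

lemma d_one (hd : Leibniz d) : d (1 : R) = 0 := by
  have h : d (1:R) = d 1 + d 1 := by simpa using hd 1 1
  have h2 : d (1:R) + d 1 = d 1 + 0 := by rw [add_zero]; exact h.symm
  exact add_left_cancel h2

lemma iterD_one (hd : Leibniz d) {l : ℕ} (hl : 0 < l) : d^[l] (1 : R) = 0 := by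
  obtain ⟨l', rfl⟩ : ∃ l', l = l' + 1 := ⟨l - 1, by omega⟩
  rw [Function.iterate_succ_apply, d_one hd, iterD_zero]

lemma one_mul' (B : PDO R d) : 1 * B = B := by
  refine ext' (funext fun n => ?_)
  rw [coeff_mul]
  have h0 : ∀ k, k ≠ 0 → ∑ᶠ m, dterm (1 : PDO R d) B n k m = 0 := by
    intro k hk
    have : ∀ m, dterm (1 : PDO R d) B n k m = 0 :=
      fun m => dterm_eq_zero_left (by rw [coeff_one, if_neg hk])
    simp only [this, finsum_zero]
  rw [finsum_eq_single _ 0 h0]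
  have h1 : ∀ m, m ≠ n → dterm (1 : PDO R d) B n 0 m = 0 := by
    intro m hm
    unfold dterm
    split
    · rename_i hpos
      have hlt : (0:ℤ) < 0 + m - n := by omega
      rw [gbinom_nat_eq_zero le_rfl (by omega), zero_smul, mul_zero]
    · rfl
  rw [finsum_eq_single _ n h1]
  unfold dterm
  rw [dif_pos (by omega : (0:ℤ) ≤ 0 + n - n)]
  have he : (0 + n - n : ℤ) = 0 := by ring
  rw [coeff_one, if_pos rfl, one_mul]
  rw [he]
  simp [gbinom_zero']

lemma mul_one' (hd : Leibniz d) (B : PDO R d) : B * 1 = B := by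
  refine ext' (funext fun n => ?_)
  rw [coeff_mul]
  have h1 : ∀ k, (∑ᶠ m, dterm B (1 : PDO R d) n k m) = dterm B (1 : PDO R d) n k 0 := by
    intro k
    refine finsum_eq_single _ 0 fun m hm => dterm_eq_zero_right (by rw [coeff_one, if_neg hm])
  rw [finsum_congr h1]
  have h2 : ∀ k, k ≠ n → dterm B (1 : PDO R d) n k 0 = 0 := by
    intro k hk
    unfold dterm
    split
    · rename_i hpos
      have : 0 < (k + 0 - n).toNat := by omega
      rw [coeff_one, if_pos rfl, iterD_one hd this, smul_zero, mul_zero]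
    · rfl
  rw [finsum_eq_single _ n h2]
  unfold dterm
  rw [dif_pos (by omega : (0:ℤ) ≤ n + 0 - n)]
  have he : (n + 0 - n : ℤ) = 0 := by ring
  rw [coeff_one, if_pos rfl, he]
  simp [gbinom_zero']

lemma iterD_mul (hd : Leibniz d) (l : ℕ) (a b : R) :
    d^[l] (a * b) = ∑ i ∈ Finset.range (l+1), (l.choose i : ℚ) • (d^[i] a * d^[l-i] b) := by
  induction l with
  | zero => simp
  | succ l ih =>
      have step : d^[l+1] (a * b)
          = ∑ i ∈ Finset.range (l+1), (l.choose i : ℚ) •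
              (d^[i] a * d^[l+1-i] b + d^[i+1] a * d^[l-i] b) := by
        rw [Function.iterate_succ_apply', ih, map_sum]
        refine Finset.sum_congr rfl fun i hi => ?_
        rw [Finset.mem_range] at hi
        rw [map_rat_smul]
        congr 1
        rw [hd]
        have h1 : d (d^[l-i] b) = d^[l+1-i] b := by
          have he : l + 1 - i = (l - i) + 1 := by omega
          rw [he, Function.iterate_succ_apply']
        have h2 : d (d^[i] a) = d^[i+1] a := (Function.iterate_succ_apply' d i a).symm
        rw [h1, h2]
        ring
      rw [step]
      have expand : ∑ i ∈ Finset.range (l+1), (l.choose i : ℚ) •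
              (d^[i] a * d^[l+1-i] b + d^[i+1] a * d^[l-i] b)
          = (∑ i ∈ Finset.range (l+1), (l.choose i : ℚ) • (d^[i] a * d^[l+1-i] b))
            + ∑ i ∈ Finset.range (l+1), (l.choose i : ℚ) • (d^[i+1] a * d^[l-i] b) := by
        rw [← Finset.sum_add_distrib]
        exact Finset.sum_congr rfl fun i _ => smul_add _ _ _
      rw [expand]
      -- target : ... = ∑ i in range (l+2), (choose (l+1) i) • (d^[i]a * d^[l+1-i]b)
      rw [Finset.sum_range_succ' (fun i => ((l+1).choose i : ℚ) • (d^[i] a * d^[l+1-i] b)) (l+1)]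
      have hsplit : ∀ i, (((l+1).choose (i+1) : ℚ)) • (d^[i+1] a * d^[l+1-(i+1)] b)
          = (l.choose i : ℚ) • (d^[i+1] a * d^[l-i] b)
            + (l.choose (i+1) : ℚ) • (d^[i+1] a * d^[l-i] b) := by
        intro i
        have : (l+1).choose (i+1) = l.choose i + l.choose (i+1) := Nat.choose_succ_succ l i
        have hsub : l + 1 - (i+1) = l - i := by omega
        rw [hsub, this]
        push_cast
        rw [add_smul]
      simp only [hsplit]
      rw [Finset.sum_add_distrib]
      have hfirst : ∑ i ∈ Finset.range (l+1), (l.choose i : ℚ) • (d^[i] a * d^[l+1-i] b)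
          = (∑ i ∈ Finset.range (l+1), (l.choose (i+1) : ℚ) • (d^[i+1] a * d^[l+1-(i+1)] b))
            + (l.choose 0 : ℚ) • (d^[0] a * d^[l+1-0] b) := by
        rw [← Finset.sum_range_succ' (fun i => (l.choose i : ℚ) • (d^[i] a * d^[l+1-i] b)) (l+1),
          Finset.sum_range_succ (fun i => (l.choose i : ℚ) • (d^[i] a * d^[l+1-i] b)) (l+1),
          Nat.choose_succ_self, Nat.cast_zero, zero_smul, add_zero]
      rw [hfirst]
      have hsub2 : ∀ i, l + 1 - (i + 1) = l - i := fun i => by omega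
      simp only [hsub2, Nat.choose_zero_right, Nat.cast_one, one_smul,
        Function.iterate_zero_apply, Nat.sub_zero]
      abel

end PDO
namespace PDO

variable {R : Type} [CommRing R] [Algebra ℚ R] {d : R →+ R}

set_option linter.unusedSectionVars false

lemma smul_shuffle1 (q1 q2 : ℚ) (f x y : R) :
    (f * (q1 • x)) * (q2 • y) = (q1 * q2) • (f * x * y) := by
  rw [mul_smul_comm q1 f x, smul_mul_assoc, mul_smul_comm, smul_smul]

lemma smul_shuffle2 (q1 q2 q3 : ℚ) (f x y : R) :
    f * (q1 • (q2 • (q3 • (x * y)))) = (q1 * q2 * q3) • (f * x * y) := by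
  rw [smul_smul, smul_smul, mul_smul_comm, ← mul_assoc]

lemma mono_mul_coeff {B : PDO R d} {NB : ℤ} (hB : Bdd B NB) (f : R) (a n : ℤ)
    {t : Finset ℕ} (ht : Finset.range ((a + NB - n).toNat + 1) ⊆ t) :
    (mono f a * B).coeff n = ∑ l ∈ t, f * (gbinom a l • d^[l] (B.coeff (n - a + l))) := by
  rw [coeff_mul_eq (bdd_mono f a) hB n (s := {a})
    (fun k hk _ => by
      rw [Finset.mem_singleton]
      by_contra hc
      exact hk (by rw [coeff_mono, if_neg hc])) ht]
  rw [Finset.sum_singleton]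
  exact Finset.sum_congr rfl fun l _ => by rw [coeff_mono, if_pos rfl]

lemma mul_mono_coeff {B : PDO R d} {NB : ℤ} (hB : Bdd B NB) (f : R) (a n : ℤ)
    {t : Finset ℕ} (ht : Finset.range ((NB + a - n).toNat + 1) ⊆ t) :
    (B * mono f a).coeff n
      = ∑ l ∈ t, B.coeff (n - a + l) * (gbinom (n - a + l) l • d^[l] f) := by
  rw [coeff_mul]
  have h1 : ∀ k, (∑ᶠ m, dterm B (mono f a) n k m) = dterm B (mono f a) n k a :=
    fun k => finsum_eq_single _ a fun m hm =>
      dterm_eq_zero_right (by rw [coeff_mono, if_neg hm])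
  rw [finsum_congr h1]
  have hinj : Set.InjOn (fun l : ℕ => n - a + l) ↑t := by
    intro l1 _ l2 _ he
    simp only at he
    omega
  have hsupp : Function.support (fun k => dterm B (mono f a) n k a)
      ⊆ ↑(t.image (fun l : ℕ => n - a + l)) := by
    intro k hk
    simp only [Function.mem_support] at hk
    by_cases h0 : 0 ≤ k + a - n
    · by_cases hkB : NB < k
      · exact absurd (dterm_eq_zero_left (hB k hkB)) hk
      · push_neg at hkB
        have hl : (k + a - n).toNat ∈ Finset.range ((NB + a - n).toNat + 1) := by
          rw [Finset.mem_range]; omega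
        simp only [Finset.coe_image, Set.mem_image, Finset.mem_coe]
        refine ⟨(k + a - n).toNat, ht hl, ?_⟩
        omega
    · exact absurd (dterm_eq_zero_low (by omega)) hk
  rw [finsum_eq_sum_of_support_subset _ hsupp, Finset.sum_image hinj]
  refine Finset.sum_congr rfl fun l _ => ?_
  have he : (n - a + (l:ℤ)) + a - n = (l:ℤ) := by ring
  unfold dterm
  rw [dif_pos (by omega), coeff_mono, if_pos rfl]
  congr 2 <;> rw [he] <;> rw [Int.toNat_natCast]

lemma mono_mul_mono_coeff (f g : R) (a b j : ℤ) :
    (mono f a * mono (d := d) g b).coeff j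
      = if 0 ≤ a + b - j then f * (gbinom a (a+b-j).toNat • d^[(a+b-j).toNat] g) else 0 := by
  rw [mono_mul_coeff (bdd_mono g b) f a j (t := Finset.range ((a + b - j).toNat + 1))
    (subset_refl _)]
  by_cases hD : 0 ≤ a + b - j
  · rw [if_pos hD]
    rw [Finset.sum_eq_single_of_mem ((a+b-j).toNat) (by rw [Finset.mem_range]; omega)
      (fun l _ hl => by rw [coeff_mono, if_neg (by omega), iterD_zero, smul_zero, mul_zero])]
    rw [coeff_mono, if_pos (by omega)]
  · rw [if_neg hD]
    refine Finset.sum_eq_zero fun l _ => ?_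
    rw [coeff_mono, if_neg (by omega), iterD_zero, smul_zero, mul_zero]

lemma gbinom_assoc_key (a b : ℤ) (Dn i : ℕ) (hi : i ≤ Dn) :
    ∑ l ∈ Finset.range (Dn+1), gbinom a l * gbinom b (Dn - l) * (l.choose i : ℚ)
      = gbinom a i * gbinom (a + b - i) (Dn - i) := by
  have hsplit : Dn + 1 = i + (Dn + 1 - i) := by omega
  rw [hsplit, Finset.sum_range_add]
  have hz : ∑ l ∈ Finset.range i, gbinom a l * gbinom b (Dn - l) * (l.choose i : ℚ) = 0 :=
    Finset.sum_eq_zero fun l hl => by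
      rw [Finset.mem_range] at hl
      rw [Nat.choose_eq_zero_of_lt hl, Nat.cast_zero, mul_zero]
  rw [hz, zero_add]
  have hterm : ∀ s, gbinom a (i + s) * gbinom b (Dn - (i + s)) * ((i + s).choose i : ℚ)
      = gbinom a i * (gbinom (a - i) s * gbinom b ((Dn - i) - s)) := by
    intro s
    have this : gbinom a (i + s) * ((i+s).choose i : ℚ) = gbinom a i * gbinom (a - i) s :=
      gbinom_subset a i s
    have hd2 : Dn - (i + s) = (Dn - i) - s := by omega
    rw [hd2]
    calc gbinom a (i + s) * gbinom b (Dn - i - s) * ((i + s).choose i : ℚ)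
        = (gbinom a (i + s) * ((i+s).choose i : ℚ)) * gbinom b (Dn - i - s) := by ring
      _ = (gbinom a i * gbinom (a - i) s) * gbinom b (Dn - i - s) := by rw [this]
      _ = gbinom a i * (gbinom (a - i) s * gbinom b (Dn - i - s)) := by ring
  simp only [hterm]
  rw [← Finset.mul_sum]
  congr 1
  have hv := gbinom_vandermonde (a - i) b (Dn - i)
  have he : Dn + 1 - i = (Dn - i) + 1 := by omega
  rw [he]
  have he2 : a - i + b = a + b - i := by ring
  rw [he2] at hv
  rw [← hv]

lemma mono_assoc (hd : Leibniz d) (f g h : R) (a b c : ℤ) :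
    (mono f a * mono g b) * mono (d := d) h c = mono f a * (mono g b * mono h c) := by
  refine ext' (funext fun n => ?_)
  have hX : Bdd (mono f a * mono (d := d) g b) (a + b) := bdd_mul (bdd_mono f a) (bdd_mono g b)
  have hY : Bdd (mono g b * mono (d := d) h c) (b + c) := bdd_mul (bdd_mono g b) (bdd_mono h c)
  set D : ℤ := a + b + c - n with hD
  have hl : ((a + b) + c - n).toNat = D.toNat := by omega
  have hr : (a + (b + c) - n).toNat = D.toNat := by omega
  rw [mul_mono_coeff hX h c n (t := Finset.range (D.toNat + 1)) (by rw [hl])]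
  rw [mono_mul_coeff hY f a n (t := Finset.range (D.toNat + 1)) (by rw [hr])]
  by_cases hDpos : 0 ≤ D
  · set Dn : ℕ := D.toNat with hDn
    -- LHS simplification
    have hLHS : ∀ l2 ∈ Finset.range (Dn + 1),
        (mono f a * mono (d := d) g b).coeff (n - c + l2) * (gbinom (n - c + l2) l2 • d^[l2] h)
          = (gbinom a (Dn - l2) * gbinom (n - c + l2) l2) • (f * d^[Dn - l2] g * d^[l2] h) := by
      intro l2 hl2
      rw [Finset.mem_range] at hl2
      rw [mono_mul_mono_coeff]
      rw [if_pos (by omega : (0:ℤ) ≤ a + b - (n - c + l2))]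
      have ht : (a + b - (n - c + l2)).toNat = Dn - l2 := by omega
      rw [ht, smul_shuffle1]
    rw [Finset.sum_congr rfl hLHS]
    -- RHS simplification
    have hRHS : ∀ l ∈ Finset.range (Dn + 1),
        f * (gbinom a l • d^[l] ((mono g b * mono (d := d) h c).coeff (n - a + l)))
          = ∑ i ∈ Finset.range (Dn + 1),
              (gbinom a l * gbinom b (Dn - l) * (l.choose i : ℚ)) • (f * d^[i] g * d^[Dn - i] h) := by
      intro l hl
      rw [Finset.mem_range] at hl
      rw [mono_mul_mono_coeff]
      rw [if_pos (by omega : (0:ℤ) ≤ b + c - (n - a + l))]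
      have ht : (b + c - (n - a + l)).toNat = Dn - l := by omega
      rw [ht]
      rw [mul_smul_comm (gbinom b (Dn - l)) g (d^[Dn - l] h), iterD_smul, iterD_mul hd]
      have hin : ∀ i ∈ Finset.range (l + 1),
          ((l.choose i : ℚ)) • (d^[i] g * d^[l - i] (d^[Dn - l] h))
            = (l.choose i : ℚ) • (d^[i] g * d^[Dn - i] h) := by
        intro i hi
        rw [Finset.mem_range] at hi
        have : d^[l - i] (d^[Dn - l] h) = d^[Dn - i] h := by
          rw [← Function.iterate_add_apply]
          congr 1
          omega
        rw [this]
      rw [Finset.sum_congr rfl hin]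
      have hext : ∑ i ∈ Finset.range (l + 1), (l.choose i : ℚ) • (d^[i] g * d^[Dn - i] h)
          = ∑ i ∈ Finset.range (Dn + 1), (l.choose i : ℚ) • (d^[i] g * d^[Dn - i] h) := by
        refine Finset.sum_subset (by intro x hx; rw [Finset.mem_range] at *; omega) ?_
        intro i _ hi
        rw [Finset.mem_range, not_lt] at hi
        rw [Nat.choose_eq_zero_of_lt (by omega), Nat.cast_zero, zero_smul]
      rw [hext, Finset.smul_sum, Finset.smul_sum, Finset.mul_sum]
      exact Finset.sum_congr rfl fun i _ => smul_shuffle2 _ _ _ _ _ _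
    rw [Finset.sum_congr rfl hRHS]
    -- swap the RHS double sum and collapse with the key identity
    rw [Finset.sum_comm]
    have hcollapse : ∀ i ∈ Finset.range (Dn + 1),
        ∑ l ∈ Finset.range (Dn + 1),
            (gbinom a l * gbinom b (Dn - l) * (l.choose i : ℚ)) • (f * d^[i] g * d^[Dn - i] h)
          = (gbinom a i * gbinom (a + b - i) (Dn - i)) • (f * d^[i] g * d^[Dn - i] h) := by
      intro i hi
      rw [Finset.mem_range] at hi
      rw [← Finset.sum_smul, gbinom_assoc_key a b Dn i (by omega)]
    rw [Finset.sum_congr rfl hcollapse]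
    -- reflect the LHS sum
    rw [← Finset.sum_range_reflect]
    have hred : ∀ i : ℕ, Dn + 1 - 1 - i = Dn - i := fun i => by omega
    simp only [hred]
    refine Finset.sum_congr rfl fun i hi => ?_
    rw [Finset.mem_range] at hi
    have h1 : Dn - (Dn - i) = i := by omega
    have h2 : (n - c + (↑(Dn - i) : ℤ)) = a + b - i := by
      have : ((Dn - i : ℕ) : ℤ) = (Dn : ℤ) - i := by omega
      rw [this]
      omega
    rw [h1, h2]
  · -- both sides vanish
    have hL : ∀ l2 ∈ Finset.range (D.toNat + 1),
        (mono f a * mono (d := d) g b).coeff (n - c + l2) * (gbinom (n - c + l2) l2 • d^[l2] h)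
          = 0 := by
      intro l2 _
      rw [mono_mul_mono_coeff, if_neg (by omega), zero_mul]
    have hR : ∀ l ∈ Finset.range (D.toNat + 1),
        f * (gbinom a l • d^[l] ((mono g b * mono (d := d) h c).coeff (n - a + l))) = 0 := by
      intro l _
      rw [mono_mul_mono_coeff, if_neg (by omega), iterD_zero, smul_zero, mul_zero]
    rw [Finset.sum_eq_zero hL, Finset.sum_eq_zero hR]

end PDO
namespace PDO

variable {R : Type} [CommRing R] [Algebra ℚ R] {d : R →+ R}

set_option linter.unusedSectionVars false

/-- `A` has only coefficients strictly below `M`. -/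
def Low (A : PDO R d) (M : ℤ) : Prop := ∀ k, M ≤ k → A.coeff k = 0

lemma low_mul_bdd {A B : PDO R d} {M NB : ℤ} (hB : Bdd B NB) (hA : Low A M) :
    Low (A * B) (M + NB) :=
  fun j hj => coeff_mul_eq_zero_left hB (fun k hk => hA k (by omega))

lemma bdd_mul_low {A B : PDO R d} {NA M : ℤ} (hA : Bdd A NA) (hB : Low B M) :
    Low (A * B) (NA + M) :=
  fun j hj => coeff_mul_eq_zero_right hA (fun m hm => hB m (by omega))

/-- The finite monomial truncation of `A` to degrees in `[M, N]`. -/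
noncomputable def Afin (A : PDO R d) (M N : ℤ) : PDO R d := ∑ k ∈ Finset.Icc M N, mono (A.coeff k) k

lemma coeff_Afin (A : PDO R d) (M N j : ℤ) :
    (Afin A M N).coeff j = if j ∈ Finset.Icc M N then A.coeff j else 0 := by
  rw [Afin, coeff_sum]
  simp only [coeff_mono]
  exact Finset.sum_ite_eq (Finset.Icc M N) j (fun k => A.coeff k)

lemma bdd_Afin (A : PDO R d) (M N : ℤ) : Bdd (Afin A M N) N := by
  intro j hj
  rw [coeff_Afin, if_neg (by rw [Finset.mem_Icc]; omega)]

lemma low_tail {A : PDO R d} {N : ℤ} (hA : Bdd A N) (M : ℤ) : Low (A - Afin A M N) M := by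
  intro k hk
  rw [coeff_sub, coeff_Afin]
  by_cases hkN : k ≤ N
  · rw [if_pos (by rw [Finset.mem_Icc]; omega), sub_self]
  · rw [if_neg (by rw [Finset.mem_Icc]; omega), hA k (by omega), sub_zero]

lemma coeff_eq_of_sub {X Y : PDO R d} {n : ℤ} (h : (X - Y).coeff n = 0) :
    X.coeff n = Y.coeff n := by
  rw [coeff_sub] at h
  exact sub_eq_zero.mp h

lemma mul_assoc' (hd : Leibniz d) (A B C : PDO R d) : A * B * C = A * (B * C) := by
  refine ext' (funext fun n => ?_)
  obtain ⟨NA, hNA⟩ := A.bdd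
  obtain ⟨NB, hNB⟩ := B.bdd
  obtain ⟨NC, hNC⟩ := C.bdd
  set MA : ℤ := n - NB - NC with hMA
  set MB : ℤ := n - NA - NC with hMB
  set MC : ℤ := n - NA - NB with hMC
  set Af : PDO R d := Afin A MA NA with hAf
  set Bf : PDO R d := Afin B MB NB with hBf
  set Cf : PDO R d := Afin C MC NC with hCf
  have hbAf : Bdd Af NA := bdd_Afin A MA NA
  have hbBf : Bdd Bf NB := bdd_Afin B MB NB
  have hbCf : Bdd Cf NC := bdd_Afin C MC NC
  have hlA : Low (A - Af) MA := low_tail hNA MA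
  have hlB : Low (B - Bf) MB := low_tail hNB MB
  have hlC : Low (C - Cf) MC := low_tail hNC MC
  -- step 1: replace A on both sides
  have e1 : (A * B * C).coeff n = (Af * B * C).coeff n := by
    refine coeff_eq_of_sub ?_
    have : A * B * C - Af * B * C = (A - Af) * B * C := by
      rw [sub_mul', sub_mul']
    rw [this]
    have hlow : Low ((A - Af) * B) (MA + NB) := low_mul_bdd hNB hlA
    exact coeff_mul_eq_zero_left hNC (fun k hk => hlow k (by omega))
  have e1' : (A * (B * C)).coeff n = (Af * (B * C)).coeff n := by
    refine coeff_eq_of_sub ?_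
    have : A * (B * C) - Af * (B * C) = (A - Af) * (B * C) := by rw [sub_mul']
    rw [this]
    exact coeff_mul_eq_zero_left (bdd_mul hNB hNC) (fun k hk => hlA k (by omega))
  -- step 2: replace B on both sides
  have e2 : (Af * B * C).coeff n = (Af * Bf * C).coeff n := by
    refine coeff_eq_of_sub ?_
    have : Af * B * C - Af * Bf * C = (Af * (B - Bf)) * C := by
      rw [mul_sub', sub_mul']
    rw [this]
    have hlow : Low (Af * (B - Bf)) (NA + MB) := bdd_mul_low hbAf hlB
    exact coeff_mul_eq_zero_left hNC (fun k hk => hlow k (by omega))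
  have e2' : (Af * (B * C)).coeff n = (Af * (Bf * C)).coeff n := by
    refine coeff_eq_of_sub ?_
    have : Af * (B * C) - Af * (Bf * C) = Af * ((B - Bf) * C) := by
      rw [← mul_sub', sub_mul']
    rw [this]
    have hlow : Low ((B - Bf) * C) (MB + NC) := low_mul_bdd hNC hlB
    exact coeff_mul_eq_zero_right hbAf (fun m hm => hlow m (by omega))
  -- step 3: replace C on both sides
  have e3 : (Af * Bf * C).coeff n = (Af * Bf * Cf).coeff n := by
    refine coeff_eq_of_sub ?_
    have : Af * Bf * C - Af * Bf * Cf = (Af * Bf) * (C - Cf) := by rw [mul_sub']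
    rw [this]
    exact coeff_mul_eq_zero_right (bdd_mul hbAf hbBf) (fun m hm => hlC m (by omega))
  have e3' : (Af * (Bf * C)).coeff n = (Af * (Bf * Cf)).coeff n := by
    refine coeff_eq_of_sub ?_
    have : Af * (Bf * C) - Af * (Bf * Cf) = Af * (Bf * (C - Cf)) := by
      rw [← mul_sub', ← mul_sub']
    rw [this]
    have hlow : Low (Bf * (C - Cf)) (NB + MC) := bdd_mul_low hbBf hlC
    exact coeff_mul_eq_zero_right hbAf (fun m hm => hlow m (by omega))
  -- finite case
  have efin : Af * Bf * Cf = Af * (Bf * Cf) := by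
    rw [hAf, hBf, hCf]
    unfold Afin
    simp only [sum_mul', mul_sum']
    refine Finset.sum_congr rfl fun k _ => Finset.sum_congr rfl fun m _ =>
      Finset.sum_congr rfl fun p _ => mono_assoc hd _ _ _ _ _ _
  rw [e1, e2, e3, e1', e2', e3', efin]

end PDO
namespace PDO

variable {R : Type} [CommRing R] [Algebra ℚ R] {d : R →+ R}

set_option linter.unusedSectionVars false

lemma coeff_pos (A : PDO R d) (n : ℤ) :
    (pos A).coeff n = if 0 ≤ n then A.coeff n else 0 := rfl

lemma coeff_negp (A : PDO R d) (n : ℤ) :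
    (negp A).coeff n = if n < 0 then A.coeff n else 0 := rfl

lemma pos_add_negp (A : PDO R d) : pos A + negp A = A := by
  refine ext' (funext fun n => ?_)
  rw [coeff_add, coeff_pos, coeff_negp]
  by_cases h : 0 ≤ n
  · rw [if_pos h, if_neg (by omega), add_zero]
  · rw [if_neg h, if_pos (by omega), zero_add]

lemma negp_add (A B : PDO R d) : negp (A + B) = negp A + negp B := by
  refine ext' (funext fun n => ?_)
  rw [coeff_add, coeff_negp, coeff_negp, coeff_negp, coeff_add]
  by_cases h : n < 0
  · rw [if_pos h, if_pos h, if_pos h]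
  · rw [if_neg h, if_neg h, if_neg h, add_zero]

lemma negp_neg (A : PDO R d) : negp (-A) = -(negp A) := by
  refine ext' (funext fun n => ?_)
  rw [coeff_neg, coeff_negp, coeff_negp, coeff_neg]
  by_cases h : n < 0
  · rw [if_pos h, if_pos h]
  · rw [if_neg h, if_neg h, neg_zero]

lemma negp_sub (A B : PDO R d) : negp (A - B) = negp A - negp B := by
  rw [sub_eq_add_neg, negp_add, negp_neg, ← sub_eq_add_neg]

lemma pos_add' (A B : PDO R d) : pos (A + B) = pos A + pos B := by
  refine ext' (funext fun n => ?_)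
  rw [coeff_add, coeff_pos, coeff_pos, coeff_pos, coeff_add]
  by_cases h : 0 ≤ n
  · rw [if_pos h, if_pos h, if_pos h]
  · rw [if_neg h, if_neg h, if_neg h, add_zero]

lemma pos_one : pos (1 : PDO R d) = 1 := by
  refine ext' (funext fun n => ?_)
  rw [coeff_pos, coeff_one]
  by_cases h : 0 ≤ n
  · rw [if_pos h]
  · rw [if_neg h, if_neg (by omega)]

lemma coeff_neg_of_negp_eq_zero {A : PDO R d} (h : negp A = 0) {n : ℤ} (hn : n < 0) :
    A.coeff n = 0 := by
  have := congrArg (fun X : PDO R d => X.coeff n) h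
  simp only [coeff_negp, coeff_zero, if_pos hn] at this
  exact this

lemma pos_eq_self_of_negp_eq_zero {A : PDO R d} (h : negp A = 0) : pos A = A := by
  have h2 := pos_add_negp A
  rw [h, add_zero] at h2
  exact h2

lemma negp_eq_zero_of (A : PDO R d) (h : ∀ n : ℤ, n < 0 → A.coeff n = 0) : negp A = 0 := by
  refine ext' (funext fun n => ?_)
  rw [coeff_negp, coeff_zero]
  by_cases hn : n < 0
  · rw [if_pos hn]; exact h n hn
  · rw [if_neg hn]

/-- product of two "differential" operators is differential -/
lemma negp_mul_eq_zero {A B : PDO R d} (hA : negp A = 0) (hB : negp B = 0) :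
    negp (A * B) = 0 := by
  refine negp_eq_zero_of _ fun n hn => ?_
  rw [coeff_mul]
  have hz : ∀ k m, dterm A B n k m = 0 := by
    intro k m
    by_cases hk : k < 0
    · exact dterm_eq_zero_left (coeff_neg_of_negp_eq_zero hA hk)
    · by_cases hm : m < 0
      · exact dterm_eq_zero_right (coeff_neg_of_negp_eq_zero hB hm)
      · unfold dterm
        rw [dif_pos (by omega)]
        rw [gbinom_nat_eq_zero (by omega) (by omega), zero_smul, mul_zero]
  simp only [hz, finsum_zero]

/-- `A` has only strictly negative order coefficients -/
def NegOrd (A : PDO R d) : Prop := ∀ n : ℤ, 0 ≤ n → A.coeff n = 0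

lemma negOrd_negp (A : PDO R d) : NegOrd (negp A) :=
  fun n hn => by rw [coeff_negp, if_neg (by omega)]

lemma pos_eq_zero_of_negOrd {A : PDO R d} (hA : NegOrd A) : pos A = 0 := by
  refine ext' (funext fun n => ?_)
  rw [coeff_pos, coeff_zero]
  by_cases h : 0 ≤ n
  · rw [if_pos h]; exact hA n h
  · rw [if_neg h]

lemma negOrd_mul {A B : PDO R d} (hA : NegOrd A) (hB : NegOrd B) : NegOrd (A * B) := by
  intro n hn
  rw [coeff_mul]
  have hz : ∀ k m, dterm A B n k m = 0 := by
    intro k m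
    by_cases hk : 0 ≤ k
    · exact dterm_eq_zero_left (hA k hk)
    · by_cases hkm : 0 ≤ k + m - n
      · exact dterm_eq_zero_right (hB m (by omega))
      · exact dterm_eq_zero_low (by omega)
  simp only [hz, finsum_zero]

/-! ### adjoint -/

/-- The summand in the adjoint. -/
def aterm (A : PDO R d) (n k : ℤ) : R :=
  if _ : 0 ≤ k - n then
    (((-1 : ℚ) ^ k) * gbinom k (k - n).toNat) • (d^[(k - n).toNat] (A.coeff k))
  else 0

lemma coeff_adj (A : PDO R d) (n : ℤ) : (adj A).coeff n = ∑ᶠ k, aterm A n k := rfl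

lemma aterm_eq_zero {A : PDO R d} {n k : ℤ} (h : A.coeff k = 0) : aterm A n k = 0 := by
  unfold aterm
  split
  · rw [h, iterD_zero, smul_zero]
  · rfl

lemma aterm_eq_zero_low {A : PDO R d} {n k : ℤ} (h : k < n) : aterm A n k = 0 := by
  unfold aterm
  rw [dif_neg (by omega)]

lemma coeff_adj_eq_sum {A : PDO R d} {NA : ℤ} (hA : Bdd A NA) (n : ℤ)
    {s : Finset ℤ} (hs : Finset.Icc n NA ⊆ s) :
    (adj A).coeff n = ∑ k ∈ s, aterm A n k := by
  rw [coeff_adj]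
  refine finsum_eq_sum_of_support_subset _ fun k hk => ?_
  simp only [Function.mem_support] at hk
  refine hs ?_
  rw [Finset.mem_Icc]
  constructor
  · by_contra hc
    exact hk (aterm_eq_zero_low (by omega))
  · by_contra hc
    exact hk (aterm_eq_zero (hA k (by omega)))

lemma bdd_adj {A : PDO R d} {NA : ℤ} (hA : Bdd A NA) : Bdd (adj A) NA := by
  intro n hn
  rw [coeff_adj]
  have hz : ∀ k, aterm A n k = 0 := by
    intro k
    by_cases hk : k < n
    · exact aterm_eq_zero_low hk
    · exact aterm_eq_zero (hA k (by omega))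
  simp only [hz, finsum_zero]

lemma negOrd_adj {A : PDO R d} (hA : NegOrd A) : NegOrd (adj A) := by
  intro n hn
  rw [coeff_adj]
  have hz : ∀ k, aterm A n k = 0 := by
    intro k
    by_cases hk : k < n
    · exact aterm_eq_zero_low hk
    · exact aterm_eq_zero (hA k (by omega))
  simp only [hz, finsum_zero]

lemma adj_add {A B : PDO R d} : adj (A + B) = adj A + adj B := by
  refine ext' (funext fun n => ?_)
  obtain ⟨NA, hNA⟩ := A.bdd
  obtain ⟨NB, hNB⟩ := B.bdd
  have hA' : Bdd A (NA ⊔ NB) := bdd_mono_le hNA le_sup_left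
  have hB' : Bdd B (NA ⊔ NB) := bdd_mono_le hNB le_sup_right
  have hAB : Bdd (A + B) (NA ⊔ NB) := bdd_add hA' hB'
  rw [coeff_add,
    coeff_adj_eq_sum hAB n (s := Finset.Icc n (NA ⊔ NB)) (subset_refl _),
    coeff_adj_eq_sum hA' n (s := Finset.Icc n (NA ⊔ NB)) (subset_refl _),
    coeff_adj_eq_sum hB' n (s := Finset.Icc n (NA ⊔ NB)) (subset_refl _),
    ← Finset.sum_add_distrib]
  refine Finset.sum_congr rfl fun k _ => ?_
  unfold aterm
  split
  · rw [coeff_add, iterD_add, smul_add]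
  · rw [add_zero]

lemma adj_one : adj (1 : PDO R d) = 1 := by
  refine ext' (funext fun n => ?_)
  rw [coeff_adj]
  have h0 : ∀ k, k ≠ 0 → aterm (1 : PDO R d) n k = 0 :=
    fun k hk => aterm_eq_zero (by rw [coeff_one, if_neg hk])
  rw [finsum_eq_single _ 0 h0]
  unfold aterm
  by_cases hn : n ≤ 0
  · rw [dif_pos (by omega)]
    by_cases hn0 : n = 0
    · subst hn0
      simp [gbinom_zero', coeff_one]
    · rw [gbinom_nat_eq_zero le_rfl (by omega), mul_zero, zero_smul, coeff_one,
        if_neg hn0]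
  · rw [dif_neg (by omega), coeff_one, if_neg (by omega)]

end PDO
namespace EPDO

variable {R : Type} [CommRing R] [Algebra ℚ R] {d : R →+ R}

theorem ext' {A B : EPDO R d} (h1 : A.re = B.re) (h2 : A.im = B.im) : A = B := by
  cases A; cases B; cases h1; cases h2; rfl

end EPDO

theorem deformed_constraint_on_Lax'
    (R : Type) [CommRing R] [Algebra ℚ R] (d : R →+ R)
    (hd : Leibniz d) (h : Rˣ) (hdh : d (h : R) = 0)
    (P Q Pinv LG : EPDO R d) (hP : EPDO.epos P = 1)
    (hPinv : P * Pinv = 1 ∧ Pinv * P = 1)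
    (h1 : EPDO.enegp ((P + EPDO.eps * Q) * EPDO.eadj (P + EPDO.eps * Q)) = 0)
    (h2 : EPDO.enegp ((P + EPDO.eps * Q) * EPDO.lift (PDO.Lop h 0)
        * EPDO.eadj (P + EPDO.eps * Q)) = 0)
    (hLG : LG = P * EPDO.lift (PDO.Lop h 0) * Pinv) :
    LG = EPDO.epos LG + EPDO.eps * EPDO.enegp (EPDO.ecomm (EPDO.epos LG) (Q * Pinv)) ∧
    EPDO.enegp LG = EPDO.eps * EPDO.enegp (EPDO.ecomm (EPDO.epos LG) (Q * Pinv)) := by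
  open PDO in
  obtain ⟨hPi1, hPi2⟩ := hPinv
  set p : PDO R d := P.re with hpdef
  set p' : PDO R d := P.im with hp'def
  set q : PDO R d := Q.re with hqdef
  set pv : PDO R d := Pinv.re with hpvdef
  set pv' : PDO R d := Pinv.im with hpv'def
  set L : PDO R d := PDO.Lop h 0 with hLdef
  -- component equations from the inverse hypothesis
  have hppv : p * pv = 1 := congrArg EPDO.re hPi1
  have him1 : p * pv' + p' * pv = 0 := congrArg EPDO.im hPi1
  have hpvp : pv * p = 1 := congrArg EPDO.re hPi2
  have hpos_p : PDO.pos p = 1 := congrArg EPDO.re hP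
  -- the dressed operator X := P + εQ
  have hXre : (P + EPDO.eps * Q).re = p + 0 * q := rfl
  have hXre' : (P + EPDO.eps * Q).re = p := by rw [hXre, PDO.zero_mul', add_zero]
  set r : PDO R d := p' + q with hrdef
  have hXim : (P + EPDO.eps * Q).im = p' + (0 * Q.im + 1 * q) := rfl
  have hXim' : (P + EPDO.eps * Q).im = r := by
    rw [hXim, PDO.zero_mul', PDO.one_mul', zero_add, hrdef]
  -- components of hypothesis h1
  have hD1 : PDO.negp ((P + EPDO.eps * Q).re * PDO.adj ((P + EPDO.eps * Q).re)) = 0 :=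
    congrArg EPDO.re h1
  rw [hXre'] at hD1
  have hD2 : PDO.negp ((P + EPDO.eps * Q).re * PDO.adj ((P + EPDO.eps * Q).im)
      + (P + EPDO.eps * Q).im * PDO.adj ((P + EPDO.eps * Q).re)) = 0 :=
    congrArg EPDO.im h1
  rw [hXre', hXim'] at hD2
  -- components of hypothesis h2
  have hE1 : PDO.negp (((P + EPDO.eps * Q).re * L) * PDO.adj ((P + EPDO.eps * Q).re)) = 0 :=
    congrArg EPDO.re h2
  rw [hXre'] at hE1
  have hE2 : PDO.negp (((P + EPDO.eps * Q).re * L) * PDO.adj ((P + EPDO.eps * Q).im)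
      + ((P + EPDO.eps * Q).re * 0 + (P + EPDO.eps * Q).im * L)
        * PDO.adj ((P + EPDO.eps * Q).re)) = 0 :=
    congrArg EPDO.im h2
  rw [hXre', hXim', PDO.mul_zero', zero_add] at hE2
  -- Step A : p * adj p = 1
  have hp_dec : p = 1 + PDO.negp p := by
    have h0 := (PDO.pos_add_negp p).symm
    rw [hpos_p] at h0
    exact h0
  have hNOnp : PDO.NegOrd (PDO.negp p) := PDO.negOrd_negp p
  have hadjp : PDO.adj p = 1 + PDO.adj (PDO.negp p) := by
    conv_lhs => rw [hp_dec]
    rw [PDO.adj_add, PDO.adj_one]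
  have hS0 : p * PDO.adj p = (1 + PDO.negp p) * (1 + PDO.adj (PDO.negp p)) := by
    rw [← hadjp, ← hp_dec]
  have hS : p * PDO.adj p
      = 1 + PDO.adj (PDO.negp p)
        + (PDO.negp p + PDO.negp p * PDO.adj (PDO.negp p)) := by
    rw [hS0, PDO.add_mul', PDO.one_mul', PDO.mul_add', PDO.mul_one' hd]
  have hSpos : PDO.pos (p * PDO.adj p) = 1 := by
    rw [hS, PDO.pos_add', PDO.pos_add', PDO.pos_add', PDO.pos_one,
      PDO.pos_eq_zero_of_negOrd (PDO.negOrd_adj hNOnp),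
      PDO.pos_eq_zero_of_negOrd hNOnp,
      PDO.pos_eq_zero_of_negOrd (PDO.negOrd_mul hNOnp (PDO.negOrd_adj hNOnp)),
      add_zero, add_zero, add_zero]
  have hppadj : p * PDO.adj p = 1 := by
    have h0 := PDO.pos_add_negp (p * PDO.adj p)
    rw [hSpos, hD1, add_zero] at h0
    exact h0.symm
  -- Step B : pv = adj p
  have hpv : pv = PDO.adj p := by
    calc pv = pv * 1 := (PDO.mul_one' hd pv).symm
      _ = pv * (p * PDO.adj p) := by rw [hppadj]
      _ = (pv * p) * PDO.adj p := (PDO.mul_assoc' hd _ _ _).symm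
      _ = 1 * PDO.adj p := by rw [hpvp]
      _ = PDO.adj p := PDO.one_mul' _
  rw [← hpv] at hE1 hE2 hD2
  -- the Lax operator's components
  set lg : PDO R d := p * L * pv with hlgdef
  have hlg0 : PDO.negp lg = 0 := hE1
  have hlgpos : PDO.pos lg = lg := PDO.pos_eq_self_of_negp_eq_zero hlg0
  have hLGre : LG.re = lg := by rw [hLG]; rfl
  have hLGim0 : LG.im = (p * L) * pv' + (p * 0 + p' * L) * pv := by rw [hLG]; rfl
  have hLGim : LG.im = (p * L) * pv' + (p' * L) * pv := by
    rw [hLGim0, PDO.mul_zero', zero_add]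
  -- key associativity computations
  have key1 : ∀ X : PDO R d, (X * pv) * lg = (X * L) * pv := by
    intro X
    have e1 : pv * lg = L * pv := by
      calc pv * (p * L * pv) = pv * (p * (L * pv)) := by rw [PDO.mul_assoc' hd p L pv]
        _ = (pv * p) * (L * pv) := (PDO.mul_assoc' hd _ _ _).symm
        _ = 1 * (L * pv) := by rw [hpvp]
        _ = L * pv := PDO.one_mul' _
    calc (X * pv) * lg = X * (pv * lg) := PDO.mul_assoc' hd _ _ _
      _ = X * (L * pv) := by rw [e1]
      _ = (X * L) * pv := (PDO.mul_assoc' hd _ _ _).symm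
  have key2 : ∀ X : PDO R d, lg * (p * X) = (p * L) * X := by
    intro X
    calc (p * L * pv) * (p * X) = (p * L) * (pv * (p * X)) := PDO.mul_assoc' hd _ _ _
      _ = (p * L) * ((pv * p) * X) := by rw [PDO.mul_assoc' hd pv p X]
      _ = (p * L) * (1 * X) := by rw [hpvp]
      _ = (p * L) * X := by rw [PDO.one_mul']
  -- Step D : the main commutator vanishing
  have hcalc : lg * (r * pv) - (r * pv) * lg
      = lg * (p * PDO.adj r + r * pv) - ((p * L) * PDO.adj r + (r * L) * pv) := by
    rw [PDO.mul_add', key2 (PDO.adj r), key1 r]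
    abel
  have hkey0 : PDO.negp (lg * (r * pv) - (r * pv) * lg) = 0 := by
    rw [hcalc, PDO.negp_sub, PDO.negp_mul_eq_zero hlg0 hD2, hE2, sub_zero]
  -- Step E : the imaginary part of LG
  have hpv'eq : pv' = -(pv * (p' * pv)) := by
    have e1 : p * pv' = -(p' * pv) := eq_neg_of_add_eq_zero_left him1
    calc pv' = 1 * pv' := (PDO.one_mul' pv').symm
      _ = (pv * p) * pv' := by rw [hpvp]
      _ = pv * (p * pv') := PDO.mul_assoc' hd _ _ _
      _ = pv * (-(p' * pv)) := by rw [e1]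
      _ = -(pv * (p' * pv)) := PDO.mul_neg' _ _
  have hLGim2 : LG.im = (p' * pv) * lg - lg * (p' * pv) := by
    rw [hLGim, hpv'eq]
    have e1 : (p * L) * (-(pv * (p' * pv))) = -(lg * (p' * pv)) := by
      rw [PDO.mul_neg']
      congr 1
      exact (PDO.mul_assoc' hd (p * L) pv (p' * pv)).symm
    have e2 : (p' * L) * pv = (p' * pv) * lg := (key1 p').symm
    rw [e1, e2]
    abel
  have hnegpim : PDO.negp LG.im = PDO.negp (lg * (q * pv) - (q * pv) * lg) := by
    have hdiff : LG.im - (lg * (q * pv) - (q * pv) * lg)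
        = -(lg * (r * pv) - (r * pv) * lg) := by
      rw [hLGim2, hrdef, PDO.add_mul' p' q pv, PDO.mul_add', PDO.add_mul']
      abel
    have h0 : PDO.negp (LG.im - (lg * (q * pv) - (q * pv) * lg)) = 0 := by
      rw [hdiff, PDO.negp_neg, hkey0, neg_zero]
    rw [PDO.negp_sub] at h0
    exact sub_eq_zero.mp h0
  -- assemble
  constructor
  · refine EPDO.ext' ?_ ?_
    · show LG.re = PDO.pos LG.re
        + 0 * PDO.negp (PDO.pos LG.re * (q * pv) - (q * pv) * PDO.pos LG.re)
      rw [PDO.zero_mul', add_zero, hLGre, hlgpos]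
    · show LG.im = PDO.pos LG.im
        + (0 * PDO.negp (PDO.pos LG.re * (q * pv' + Q.im * pv)
              + PDO.pos LG.im * (q * pv)
            - ((q * pv) * PDO.pos LG.im + (q * pv' + Q.im * pv) * PDO.pos LG.re))
          + 1 * PDO.negp (PDO.pos LG.re * (q * pv) - (q * pv) * PDO.pos LG.re))
      rw [PDO.zero_mul', PDO.one_mul', zero_add, hLGre, hlgpos, ← hnegpim,
        PDO.pos_add_negp]
  · refine EPDO.ext' ?_ ?_
    · show PDO.negp LG.re
        = 0 * PDO.negp (PDO.pos LG.re * (q * pv) - (q * pv) * PDO.pos LG.re)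
      rw [PDO.zero_mul', hLGre, hlg0]
    · show PDO.negp LG.im
        = 0 * PDO.negp (PDO.pos LG.re * (q * pv' + Q.im * pv)
              + PDO.pos LG.im * (q * pv)
            - ((q * pv) * PDO.pos LG.im + (q * pv' + Q.im * pv) * PDO.pos LG.re))
          + 1 * PDO.negp (PDO.pos LG.re * (q * pv) - (q * pv) * PDO.pos LG.re)
      rw [PDO.zero_mul', PDO.one_mul', zero_add, hLGre, hlgpos, ← hnegpim]


/-- If `((P+εQ)(P+εQ)*)₋ = 0` and `((P+εQ)·h²∂²·(P+εQ)*)₋ = 0` with `P₊ = 1` (coefficients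
in the dual numbers), then `L_G := P·h²∂²·P⁻¹` satisfies
`L_G = (L_G)₊ + ε[(L_G)₊, QP⁻¹]₋`; in particular `(L_G)₋ = ε[(L_G)₊, QP⁻¹]₋`. -/
theorem deformed_constraint_on_Lax
    (R : Type) [CommRing R] [Algebra ℚ R] (d : R →+ R)
    (hd : Leibniz d) (h : Rˣ) (hdh : d (h : R) = 0)
    (P Q Pinv LG : EPDO R d) (hP : EPDO.epos P = 1)
    (hPinv : P * Pinv = 1 ∧ Pinv * P = 1)
    (h1 : EPDO.enegp ((P + EPDO.eps * Q) * EPDO.eadj (P + EPDO.eps * Q)) = 0)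
    (h2 : EPDO.enegp ((P + EPDO.eps * Q) * EPDO.lift (PDO.Lop h 0)
        * EPDO.eadj (P + EPDO.eps * Q)) = 0)
    (hLG : LG = P * EPDO.lift (PDO.Lop h 0) * Pinv) :
    LG = EPDO.epos LG + EPDO.eps * EPDO.enegp (EPDO.ecomm (EPDO.epos LG) (Q * Pinv)) ∧
    EPDO.enegp LG = EPDO.eps * EPDO.enegp (EPDO.ecomm (EPDO.epos LG) (Q * Pinv)) := by
  exact deformed_constraint_on_Lax' R d hd h hdh P Q Pinv LG hP hPinv h1 h2 hLG
end
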